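/- arXiv:math-ph/0404069 — 3 statements merged into one kernel-verified Lean document; each statement's English description precedes it below -/
import Mathlib

section
/- Let y₀ ∈ (0, π) and set c₃ = π² · min{y₀^{−2}, (π − y₀)^{−2}} − 1. Then for every v ∈ H^1(0, π) with v(y₀) = 0, one has ∫₀^π |v(y)|² sin² y dy ≤ c₃^{−1} ∫₀^π |v'(y)|² sin² y dy. -/
open MeasureTheory Real

section WeightedPoincareAux
open Set Filter Topology intervalIntegral


lemma tendsto_sq_div (r h : ℝ → ℝ) (e r' h' : ℝ) (hr : HasDerivAt r r' e)
    (hh : HasDerivAt h h' e) (hre : r e = 0) (hhe : h e = 0) (hh' : h' ≠ 0) :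
    Tendsto (fun y => r y ^ 2 / h y) (𝓝[≠] e) (𝓝 0) := by
  have h1 : Tendsto (slope r e) (𝓝[≠] e) (𝓝 r') := hasDerivAt_iff_tendsto_slope.1 hr
  have h2 : Tendsto (slope h e) (𝓝[≠] e) (𝓝 h') := hasDerivAt_iff_tendsto_slope.1 hh
  have h3 : Tendsto (fun y : ℝ => y - e) (𝓝[≠] e) (𝓝 0) := by
    have : Tendsto (fun y : ℝ => y - e) (𝓝 e) (𝓝 (e - e)) :=
      (continuous_id.sub continuous_const).tendsto e
    rw [sub_self] at this
    exact this.mono_left nhdsWithin_le_nhds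
  have key : Tendsto (fun y => (slope r e y) ^ 2 * (y - e) / slope h e y) (𝓝[≠] e)
      (𝓝 (r' ^ 2 * 0 / h')) := (((h1.pow 2).mul h3).div h2 hh')
  rw [show r' ^ 2 * 0 / h' = 0 by ring] at key
  refine Tendsto.congr' ?_ key
  filter_upwards [self_mem_nhdsWithin] with y hy
  have hy' : y - e ≠ 0 := sub_ne_zero.2 hy
  simp only [slope_def_field, hre, hhe, sub_zero]
  rcases eq_or_ne (h y) 0 with h0 | h0
  · simp [h0, div_eq_iff, hy']
  · field_simp

set_option maxHeartbeats 2000000 in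
lemma core (a b : ℝ) (ha : 0 ≤ a) (hb : b ≤ π) (hab : a < b)
    (v : ℝ → ℝ) (hv : ∀ y ∈ Set.Icc a b, DifferentiableAt ℝ v y)
    (hA : IntegrableOn (fun y => (deriv v y) ^ 2 * Real.sin y ^ 2) (Set.Ioo a b))
    (hva : Real.sin a = 0 ∨ v a = 0) (hvb : Real.sin b = 0 ∨ v b = 0) :
    ((π / (b - a)) ^ 2 - 1) * ∫ y in Set.Ioo a b, (v y) ^ 2 * Real.sin y ^ 2
      ≤ ∫ y in Set.Ioo a b, (deriv v y) ^ 2 * Real.sin y ^ 2 := by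
  have hba : 0 < b - a := sub_pos.2 hab
  obtain ⟨β, hβdef⟩ : ∃ x : ℝ, x = π / (b - a) := ⟨_, rfl⟩
  have hβ : 0 < β := hβdef ▸ div_pos Real.pi_pos hba
  have hβba : β * (b - a) = π := by rw [hβdef]; exact div_mul_cancel₀ _ hba.ne'
  obtain ⟨c, hcdef⟩ : ∃ x : ℝ, x = β ^ 2 - 1 := ⟨_, rfl⟩
  set g : ℝ → ℝ := fun y => β * Real.cos (β * (y - a)) / Real.sin (β * (y - a)) - Real.cos y / Real.sin y with hgdef
  set F : ℝ → ℝ := fun y => g y * Real.sin y ^ 2 * v y ^ 2 with hFdef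
  set A : ℝ → ℝ := fun y => (deriv v y) ^ 2 * Real.sin y ^ 2 with hAdef
  set B : ℝ → ℝ := fun y => (v y) ^ 2 * Real.sin y ^ 2 with hBdef
  set C : ℝ → ℝ := fun y => (deriv v y - g y * v y) ^ 2 * Real.sin y ^ 2 with hCdef
  clear_value g F A B C
  rw [show (π / (b - a)) ^ 2 - 1 = c by rw [hcdef, hβdef]]
  have hsin : ∀ y ∈ Set.Ioo a b, 0 < Real.sin y := fun y hy =>
    Real.sin_pos_of_pos_of_lt_pi (lt_of_le_of_lt ha hy.1) (lt_of_lt_of_le hy.2 hb)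
  have hsint : ∀ y ∈ Set.Ioo a b, 0 < Real.sin (β * (y - a)) := by
    intro y hy
    apply Real.sin_pos_of_pos_of_lt_pi
    · exact mul_pos hβ (sub_pos.2 hy.1)
    · rw [← hβba]
      exact mul_lt_mul_of_pos_left (by linarith [hy.2]) hβ
  have hvc : ContinuousOn v (Set.Icc a b) := fun y hy => ((hv y hy).continuousAt).continuousWithinAt
  -- pointwise derivative identity
  have hFderiv : ∀ y ∈ Set.Ioo a b, HasDerivAt F (A y - c * B y - C y) y := by
    intro y hy
    have hst : Real.sin (β * (y - a)) ≠ 0 := (hsint y hy).ne'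
    have hs : Real.sin y ≠ 0 := (hsin y hy).ne'
    have hdv := (hv y (Set.Ioo_subset_Icc_self hy)).hasDerivAt
    have hlin : HasDerivAt (fun y : ℝ => β * (y - a)) β y := by
      simpa using ((hasDerivAt_id y).sub_const a).const_mul β
    have hct : HasDerivAt (fun y : ℝ => Real.cos (β * (y - a))) (-Real.sin (β * (y - a)) * β) y :=
      (Real.hasDerivAt_cos _).comp y hlin
    have hstd : HasDerivAt (fun y : ℝ => Real.sin (β * (y - a))) (Real.cos (β * (y - a)) * β) y :=
      (Real.hasDerivAt_sin _).comp y hlin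
    have hq1 : HasDerivAt (fun y : ℝ => β * Real.cos (β * (y - a)) / Real.sin (β * (y - a)))
        ((β * (-Real.sin (β * (y - a)) * β) * Real.sin (β * (y - a)) - β * Real.cos (β * (y - a)) * (Real.cos (β * (y - a)) * β)) / Real.sin (β * (y - a)) ^ 2) y :=
      (hct.const_mul β).div hstd hst
    have hq2 : HasDerivAt (fun y : ℝ => Real.cos y / Real.sin y)
        ((-Real.sin y * Real.sin y - Real.cos y * Real.cos y) / Real.sin y ^ 2) y :=
      (Real.hasDerivAt_cos y).div (Real.hasDerivAt_sin y) hs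
    have hg := hq1.sub hq2
    have hs2 : HasDerivAt (fun y : ℝ => Real.sin y ^ 2) (2 * Real.sin y ^ 1 * Real.cos y) y :=
      (Real.hasDerivAt_sin y).pow 2
    have hv2 : HasDerivAt (fun y : ℝ => v y ^ 2) (2 * v y ^ 1 * deriv v y) y :=
      hdv.pow 2
    have hF := (hg.mul hs2).mul hv2
    simp only [hFdef, hAdef, hBdef, hCdef, hgdef, hcdef]
    convert hF using 1
    · rfl
    · rfl
    · rfl
    simp only [Pi.sub_apply, Pi.mul_apply]
    field_simp
    ring_nf
  -- endpoint limits of F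
  have hFlim : ∀ (e : ℝ) (l : Filter ℝ), e ∈ Set.Icc a b → Real.sin e * v e = 0 →
      Real.sin (β * (e - a)) = 0 → Real.cos (β * (e - a)) * β ≠ 0 →
      l ≤ 𝓝[≠] e → Set.Ioo a b ∈ l → Tendsto F l (𝓝 0) := by
    intro e l hel hsve hsinbe hcosbe hlne hIool
    have hl𝓝 : l ≤ 𝓝 e := le_trans hlne nhdsWithin_le_nhds
    have hdv := (hv e hel).hasDerivAt
    have hlin : HasDerivAt (fun y : ℝ => β * (y - a)) β e := by
      simpa using ((hasDerivAt_id e).sub_const a).const_mul β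
    have hr : HasDerivAt (fun y => Real.sin y * v y)
        (Real.cos e * v e + Real.sin e * deriv v e) e := (Real.hasDerivAt_sin e).mul hdv
    have hh : HasDerivAt (fun y : ℝ => Real.sin (β * (y - a))) (Real.cos (β * (e - a)) * β) e :=
      (Real.hasDerivAt_sin _).comp e hlin
    have T2 : Tendsto (fun y => (Real.sin y * v y) ^ 2 / Real.sin (β * (y - a))) l (𝓝 0) :=
      (tendsto_sq_div _ _ e _ _ hr hh hsve hsinbe hcosbe).mono_left hlne
    have T1 : Tendsto (fun y => β * Real.cos (β * (y - a))) l
        (𝓝 (β * Real.cos (β * (e - a)))) := by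
      have : Continuous fun y : ℝ => β * Real.cos (β * (y - a)) :=
        continuous_const.mul (Real.continuous_cos.comp (continuous_const.mul (continuous_id.sub continuous_const)))
      exact (this.tendsto e).mono_left hl𝓝
    have T3 : Tendsto (fun y => Real.cos y * Real.sin y * v y ^ 2) l
        (𝓝 (Real.cos e * Real.sin e * v e ^ 2)) := by
      have : ContinuousAt (fun y => Real.cos y * Real.sin y * v y ^ 2) e :=
        (Real.continuous_cos.continuousAt.mul Real.continuous_sin.continuousAt).mul
          ((hv e hel).continuousAt.pow 2)
      exact this.tendsto.mono_left hl𝓝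
    have hval : Real.cos e * Real.sin e * v e ^ 2 = 0 := by
      have h5 : Real.sin e * v e ^ 2 = 0 := by
        rw [pow_two, ← mul_assoc, hsve, zero_mul]
      rw [mul_assoc, h5, mul_zero]
    have Tall : Tendsto (fun y => β * Real.cos (β * (y - a)) * ((Real.sin y * v y) ^ 2 / Real.sin (β * (y - a)))
        - Real.cos y * Real.sin y * v y ^ 2) l (𝓝 (β * Real.cos (β * (e - a)) * 0 - Real.cos e * Real.sin e * v e ^ 2)) :=
      (T1.mul T2).sub T3
    rw [hval, mul_zero, sub_zero] at Tall
    refine Tendsto.congr' ?_ Tall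
    filter_upwards [hIool] with y hy
    have hs : Real.sin y ≠ 0 := (hsin y hy).ne'
    simp only [hFdef, hgdef]
    rcases eq_or_ne (Real.sin (β * (y - a))) 0 with h0 | h0
    · field_simp [h0]
    · field_simp
  -- specialize endpoint limits
  have hsva : Real.sin a * v a = 0 := by rcases hva with h | h <;> simp [h]
  have hsvb : Real.sin b * v b = 0 := by rcases hvb with h | h <;> simp [h]
  have hFa : Tendsto F (𝓝[>] a) (𝓝 0) := by
    refine hFlim a (𝓝[>] a) (Set.left_mem_Icc.2 hab.le) hsva ?_ ?_ ?_ ?_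
    · simp
    · simp [hβ.ne']
    · exact nhdsWithin_mono a fun y hy => ne_of_gt hy
    · exact Ioo_mem_nhdsGT_of_mem ⟨le_refl a, hab⟩
  have hFb : Tendsto F (𝓝[<] b) (𝓝 0) := by
    refine hFlim b (𝓝[<] b) (Set.right_mem_Icc.2 hab.le) hsvb ?_ ?_ ?_ ?_
    · rw [hβba, Real.sin_pi]
    · rw [hβba, Real.cos_pi]
      simpa using hβ.ne'
    · exact nhdsWithin_mono b fun y hy => ne_of_lt hy
    · exact Ioo_mem_nhdsLT_of_mem ⟨hab, le_refl b⟩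
  -- the exhausting sequence
  obtain ⟨ee, heedef⟩ : ∃ f : ℕ → ℝ, f = fun n : ℕ => (b - a) / ((n : ℝ) + 3) := ⟨_, rfl⟩
  have heepos : ∀ n, 0 < ee n := by
    intro n
    rw [heedef]
    exact div_pos hba (by positivity)
  have heethird : ∀ n : ℕ, ee n ≤ (b - a) / 3 := by
    intro n
    rw [heedef]
    apply div_le_div_of_nonneg_left hba.le (by norm_num)
    have : (0:ℝ) ≤ n := Nat.cast_nonneg n
    linarith
  have heeanti : Antitone ee := by
    intro n m hnm
    simp only [heedef]
    apply div_le_div_of_nonneg_left hba.le (by positivity)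
    have : (n:ℝ) ≤ m := Nat.cast_le.2 hnm
    linarith
  obtain ⟨aa, haadef⟩ : ∃ f : ℕ → ℝ, f = fun n => a + ee n := ⟨_, rfl⟩
  obtain ⟨bb, hbbdef⟩ : ∃ f : ℕ → ℝ, f = fun n => b - ee n := ⟨_, rfl⟩
  have haab : ∀ n, a < aa n := by
    intro n
    rw [haadef]
    exact lt_add_of_pos_right a (heepos n)
  have habb : ∀ n, bb n < b := by
    intro n
    rw [hbbdef]
    exact sub_lt_self b (heepos n)
  have haabb : ∀ n, aa n < bb n := by
    intro n
    have h1 := heethird n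
    have h2 := heepos n
    simp only [haadef, hbbdef]
    linarith
  have hIccsub : ∀ n, Set.Icc (aa n) (bb n) ⊆ Set.Ioo a b := fun n y hy =>
    ⟨lt_of_lt_of_le (haab n) hy.1, lt_of_le_of_lt hy.2 (habb n)⟩
  have hgm : Measurable g := by
    rw [hgdef]
    exact ((measurable_const.mul (Real.measurable_cos.comp (measurable_const.mul
        (measurable_id.sub measurable_const)))).div
      (Real.measurable_sin.comp (measurable_const.mul (measurable_id.sub measurable_const)))).sub
      (Real.measurable_cos.div Real.measurable_sin)
  have hBcont : ContinuousOn B (Set.Icc a b) := by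
    rw [hBdef]
    exact (hvc.pow 2).mul (Real.continuous_sin.continuousOn.pow 2)
  -- the key inequality on each compact subinterval
  have key : ∀ n, c * (∫ y in Set.Ioo (aa n) (bb n), B y) + (F (bb n) - F (aa n))
      ≤ ∫ y in Set.Ioo (aa n) (bb n), A y := by
    intro n
    have hle : aa n ≤ bb n := (haabb n).le
    have hIocsub : Set.Ioc (aa n) (bb n) ⊆ Set.Ioo a b :=
      Set.Ioc_subset_Icc_self.trans (hIccsub n)
    have hAint : IntervalIntegrable A volume (aa n) (bb n) :=
      (intervalIntegrable_iff_integrableOn_Ioc_of_le hle).2 (hA.mono_set hIocsub)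
    have hBint : IntervalIntegrable B volume (aa n) (bb n) := by
      apply ContinuousOn.intervalIntegrable
      apply hBcont.mono
      rw [uIcc_of_le hle]
      exact (hIccsub n).trans Set.Ioo_subset_Icc_self
    have hgcont : ContinuousOn g (Set.Icc (aa n) (bb n)) := by
      rw [hgdef]
      apply ContinuousOn.sub
      · apply ContinuousOn.div
        · exact (continuous_const.mul (Real.continuous_cos.comp
            (continuous_const.mul (continuous_id.sub continuous_const)))).continuousOn
        · exact (Real.continuous_sin.comp
            (continuous_const.mul (continuous_id.sub continuous_const))).continuousOn
        · exact fun y hy => (hsint y (hIccsub n hy)).ne'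
      · apply ContinuousOn.div
        · exact Real.continuous_cos.continuousOn
        · exact Real.continuous_sin.continuousOn
        · exact fun y hy => (hsin y (hIccsub n hy)).ne'
    have hφint : IntegrableOn (fun y => 2 * A y + 2 * ((g y * v y) ^ 2 * Real.sin y ^ 2))
        (Set.Ioc (aa n) (bb n)) := by
      apply Integrable.add
      · exact ((hA.mono_set hIocsub).const_mul 2)
      · have hcont : ContinuousOn (fun y => 2 * ((g y * v y) ^ 2 * Real.sin y ^ 2))
            (Set.Icc (aa n) (bb n)) := by
          apply ContinuousOn.mul continuousOn_const
          exact ((hgcont.mul (hvc.mono ((hIccsub n).trans Set.Ioo_subset_Icc_self))).pow 2).mul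
            (Real.continuous_sin.continuousOn.pow 2)
        exact (hcont.integrableOn_Icc).mono_set Set.Ioc_subset_Icc_self
    have hCaesm : AEStronglyMeasurable C (volume.restrict (Set.Ioc (aa n) (bb n))) := by
      have hva' : AEStronglyMeasurable v (volume.restrict (Set.Ioc (aa n) (bb n))) :=
        (hvc.mono (Set.Ioc_subset_Icc_self.trans ((hIccsub n).trans
          Set.Ioo_subset_Icc_self))).aestronglyMeasurable measurableSet_Ioc
      have h1 : AEStronglyMeasurable (fun y => deriv v y - g y * v y)
          (volume.restrict (Set.Ioc (aa n) (bb n))) :=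
        (measurable_deriv v).aestronglyMeasurable.sub (hgm.aestronglyMeasurable.mul hva')
      exact ((h1.mul h1).mul (Real.measurable_sin.aestronglyMeasurable.mul
        Real.measurable_sin.aestronglyMeasurable)).congr (by
          filter_upwards with y
          simp only [hCdef, Pi.mul_apply, Pi.pow_apply]
          ring)
    have hCint : IntervalIntegrable C volume (aa n) (bb n) := by
      rw [intervalIntegrable_iff_integrableOn_Ioc_of_le hle]
      apply hφint.mono' hCaesm
      filter_upwards with y
      simp only [hCdef, hAdef]
      rw [Real.norm_eq_abs, abs_of_nonneg (mul_nonneg (sq_nonneg _) (sq_nonneg _))]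
      nlinarith [sq_nonneg (deriv v y + g y * v y), sq_nonneg (Real.sin y),
        sq_nonneg ((deriv v y + g y * v y) * Real.sin y)]
    have hPint : IntervalIntegrable (fun y => A y - c * B y - C y) volume (aa n) (bb n) :=
      (hAint.sub (hBint.const_mul c)).sub hCint
    have hFTC : ∫ y in (aa n)..(bb n), (A y - c * B y - C y) = F (bb n) - F (aa n) :=
      integral_eq_sub_of_hasDerivAt
        (fun y hy => hFderiv y (hIccsub n (by rwa [uIcc_of_le hle] at hy))) hPint
    have hsplit : ∫ y in (aa n)..(bb n), (A y - c * B y - C y)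
        = (∫ y in (aa n)..(bb n), A y) - c * (∫ y in (aa n)..(bb n), B y)
          - ∫ y in (aa n)..(bb n), C y := by
      rw [show (∫ y in (aa n)..(bb n), (A y - c * B y - C y)) = ∫ y in (aa n)..(bb n), (A y - c * B y) - C y from rfl,
        intervalIntegral.integral_sub (hAint.sub (hBint.const_mul c)) hCint,
        intervalIntegral.integral_sub hAint (hBint.const_mul c),
        intervalIntegral.integral_const_mul]
    have hCnn : 0 ≤ ∫ y in (aa n)..(bb n), C y := by
      apply intervalIntegral.integral_nonneg hle
      intro y _
      rw [hCdef]
      exact mul_nonneg (sq_nonneg _) (sq_nonneg _)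
    have hioA : ∫ y in (aa n)..(bb n), A y = ∫ y in Set.Ioo (aa n) (bb n), A y := by
      rw [intervalIntegral.integral_of_le hle, MeasureTheory.integral_Ioc_eq_integral_Ioo]
    have hioB : ∫ y in (aa n)..(bb n), B y = ∫ y in Set.Ioo (aa n) (bb n), B y := by
      rw [intervalIntegral.integral_of_le hle, MeasureTheory.integral_Ioc_eq_integral_Ioo]
    rw [← hioA, ← hioB]
    linarith [hFTC, hsplit, hCnn]
  -- limits
  have hmono : Monotone fun n => Set.Ioo (aa n) (bb n) := by
    intro n m hnm
    apply Set.Ioo_subset_Ioo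
    · simp only [haadef]
      linarith [heeanti hnm]
    · simp only [hbbdef]
      linarith [heeanti hnm]
  have hunion : (⋃ n, Set.Ioo (aa n) (bb n)) = Set.Ioo a b := by
    apply Set.Subset.antisymm
    · exact Set.iUnion_subset fun n => Set.Ioo_subset_Ioo (haab n).le (habb n).le
    · intro y hy
      have hm : 0 < min (y - a) (b - y) := lt_min (sub_pos.2 hy.1) (sub_pos.2 hy.2)
      obtain ⟨n, hn⟩ := exists_nat_gt ((b - a) / min (y - a) (b - y))
      refine Set.mem_iUnion.2 ⟨n, ?_, ?_⟩
      · have hen : ee n < y - a := by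
          have h1 : ee n < min (y - a) (b - y) := by
            rw [heedef]
            rw [div_lt_iff₀ (by positivity)]
            have h2 : b - a < ((n:ℝ)) * min (y - a) (b - y) := by
              calc b - a = ((b - a) / min (y - a) (b - y)) * min (y - a) (b - y) := by
                    field_simp
                _ < n * min (y - a) (b - y) := by
                    exact mul_lt_mul_of_pos_right hn hm
            nlinarith [hm.le, Nat.cast_nonneg (α := ℝ) n]
          exact lt_of_lt_of_le h1 (min_le_left _ _)
        simp only [haadef]
        linarith
      · have hen : ee n < b - y := by
          have h1 : ee n < min (y - a) (b - y) := by
            rw [heedef]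
            rw [div_lt_iff₀ (by positivity)]
            have h2 : b - a < ((n:ℝ)) * min (y - a) (b - y) := by
              calc b - a = ((b - a) / min (y - a) (b - y)) * min (y - a) (b - y) := by
                    field_simp
                _ < n * min (y - a) (b - y) := by
                    exact mul_lt_mul_of_pos_right hn hm
            nlinarith [hm.le, Nat.cast_nonneg (α := ℝ) n]
          exact lt_of_lt_of_le h1 (min_le_right _ _)
        simp only [hbbdef]
        linarith
  have hBi : IntegrableOn B (Set.Ioo a b) :=
    hBcont.integrableOn_Icc.mono_set Set.Ioo_subset_Icc_self
  have L_A : Tendsto (fun n => ∫ y in Set.Ioo (aa n) (bb n), A y) atTop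
      (𝓝 (∫ y in Set.Ioo a b, A y)) := by
    have := MeasureTheory.tendsto_setIntegral_of_monotone (fun n => measurableSet_Ioo)
      hmono (by rw [hunion]; exact hA)
    rwa [hunion] at this
  have L_B : Tendsto (fun n => ∫ y in Set.Ioo (aa n) (bb n), B y) atTop
      (𝓝 (∫ y in Set.Ioo a b, B y)) := by
    have := MeasureTheory.tendsto_setIntegral_of_monotone (fun n => measurableSet_Ioo)
      hmono (by rw [hunion]; exact hBi)
    rwa [hunion] at this
  have hee0 : Tendsto ee atTop (𝓝 0) := by
    have h1 : Tendsto (fun n : ℕ => ((n : ℝ) + 3)) atTop atTop :=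
      Filter.tendsto_atTop_add_const_right atTop 3 tendsto_natCast_atTop_atTop
    have h2 : Tendsto (fun n : ℕ => ((n : ℝ) + 3)⁻¹) atTop (𝓝 0) := h1.inv_tendsto_atTop
    have h3 := h2.const_mul (b - a)
    rw [mul_zero] at h3
    refine h3.congr fun n => ?_
    simp only [heedef]
    rw [div_eq_mul_inv]
  have haaT : Tendsto aa atTop (𝓝[>] a) := by
    rw [tendsto_nhdsWithin_iff]
    constructor
    · have := tendsto_const_nhds (x := a) (f := atTop (α := ℕ)) |>.add hee0
      rw [add_zero] at this
      refine this.congr fun n => ?_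
      rw [haadef]
    · exact Filter.Eventually.of_forall fun n => haab n
  have hbbT : Tendsto bb atTop (𝓝[<] b) := by
    rw [tendsto_nhdsWithin_iff]
    constructor
    · have := tendsto_const_nhds (x := b) (f := atTop (α := ℕ)) |>.sub hee0
      rw [sub_zero] at this
      refine this.congr fun n => ?_
      rw [hbbdef]
    · exact Filter.Eventually.of_forall fun n => habb n
  have L_F : Tendsto (fun n => F (bb n) - F (aa n)) atTop (𝓝 0) := by
    have := (hFb.comp hbbT).sub (hFa.comp haaT)
    rw [sub_zero] at this
    exact this
  have L_left : Tendsto (fun n => c * (∫ y in Set.Ioo (aa n) (bb n), B y)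
      + (F (bb n) - F (aa n))) atTop (𝓝 (c * ∫ y in Set.Ioo a b, B y)) := by
    have := (L_B.const_mul c).add L_F
    rw [add_zero] at this
    exact this
  exact le_of_tendsto_of_tendsto' L_left L_A key

lemma normsq_c (z : ℂ) : ‖z‖ ^ 2 = z.re ^ 2 + z.im ^ 2 := by
  rw [Complex.sq_norm, Complex.normSq_apply]; ring

set_option maxHeartbeats 1000000 in
lemma coreC (a b : ℝ) (ha : 0 ≤ a) (hb : b ≤ π) (hab : a < b) (v : ℝ → ℂ)
    (hv : ∀ y ∈ Set.Icc 0 π, DifferentiableAt ℝ v y)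
    (hA : IntegrableOn (fun y => ‖deriv v y‖ ^ 2 * Real.sin y ^ 2) (Set.Ioo a b))
    (hva : Real.sin a = 0 ∨ v a = 0) (hvb : Real.sin b = 0 ∨ v b = 0) :
    ((π / (b - a)) ^ 2 - 1) * ∫ y in Set.Ioo a b, ‖v y‖ ^ 2 * Real.sin y ^ 2
      ≤ ∫ y in Set.Ioo a b, ‖deriv v y‖ ^ 2 * Real.sin y ^ 2 := by
  have hsub : Set.Icc a b ⊆ Set.Icc 0 π := Set.Icc_subset_Icc ha hb
  have hv' : ∀ y ∈ Set.Icc a b, DifferentiableAt ℝ v y := fun y hy => hv y (hsub hy)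
  have hvcont : ContinuousOn v (Set.Icc a b) := fun y hy =>
    (hv' y hy).continuousAt.continuousWithinAt
  set vr : ℝ → ℝ := fun t => (v t).re with hvrdef
  set vi : ℝ → ℝ := fun t => (v t).im with hvidef
  have hdr : ∀ y ∈ Set.Icc a b, HasDerivAt vr ((deriv v y).re) y := fun y hy => by
    exact (Complex.reCLM.hasFDerivAt.comp_hasDerivAt y ((hv' y hy).hasDerivAt))
  have hdi : ∀ y ∈ Set.Icc a b, HasDerivAt vi ((deriv v y).im) y := fun y hy => by
    exact (Complex.imCLM.hasFDerivAt.comp_hasDerivAt y ((hv' y hy).hasDerivAt))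
  have hdrv : ∀ y ∈ Set.Icc a b, deriv vr y = (deriv v y).re := fun y hy => (hdr y hy).deriv
  have hdiv : ∀ y ∈ Set.Icc a b, deriv vi y = (deriv v y).im := fun y hy => (hdi y hy).deriv
  -- integrability of the component derivative integrands
  have hAr' : IntegrableOn (fun y => ((deriv v y).re) ^ 2 * Real.sin y ^ 2) (Set.Ioo a b) := by
    apply hA.mono' (((Complex.measurable_re.comp (measurable_deriv v)).pow_const 2).mul
      ((Real.measurable_sin.pow_const 2))).aestronglyMeasurable
    filter_upwards with y
    rw [Real.norm_eq_abs, abs_of_nonneg (mul_nonneg (sq_nonneg _) (sq_nonneg _))]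
    have h1 : ((deriv v y).re) ^ 2 ≤ ‖deriv v y‖ ^ 2 := by
      rw [normsq_c]
      nlinarith [sq_nonneg ((deriv v y).im)]
    exact mul_le_mul_of_nonneg_right h1 (sq_nonneg _)
  have hAi' : IntegrableOn (fun y => ((deriv v y).im) ^ 2 * Real.sin y ^ 2) (Set.Ioo a b) := by
    apply hA.mono' (((Complex.measurable_im.comp (measurable_deriv v)).pow_const 2).mul
      ((Real.measurable_sin.pow_const 2))).aestronglyMeasurable
    filter_upwards with y
    rw [Real.norm_eq_abs, abs_of_nonneg (mul_nonneg (sq_nonneg _) (sq_nonneg _))]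
    have h1 : ((deriv v y).im) ^ 2 ≤ ‖deriv v y‖ ^ 2 := by
      rw [normsq_c]
      nlinarith [sq_nonneg ((deriv v y).re)]
    exact mul_le_mul_of_nonneg_right h1 (sq_nonneg _)
  have hEqr : Set.EqOn (fun y => ((deriv v y).re) ^ 2 * Real.sin y ^ 2)
      (fun y => (deriv vr y) ^ 2 * Real.sin y ^ 2) (Set.Ioo a b) := fun y hy => by
    simp only [hdrv y (Set.Ioo_subset_Icc_self hy)]
  have hEqi : Set.EqOn (fun y => ((deriv v y).im) ^ 2 * Real.sin y ^ 2)
      (fun y => (deriv vi y) ^ 2 * Real.sin y ^ 2) (Set.Ioo a b) := fun y hy => by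
    simp only [hdiv y (Set.Ioo_subset_Icc_self hy)]
  have hAr : IntegrableOn (fun y => (deriv vr y) ^ 2 * Real.sin y ^ 2) (Set.Ioo a b) :=
    hAr'.congr_fun hEqr measurableSet_Ioo
  have hAi : IntegrableOn (fun y => (deriv vi y) ^ 2 * Real.sin y ^ 2) (Set.Ioo a b) :=
    hAi'.congr_fun hEqi measurableSet_Ioo
  have hvar : Real.sin a = 0 ∨ vr a = 0 := hva.imp id fun h => by simp [hvrdef, h]
  have hvbr : Real.sin b = 0 ∨ vr b = 0 := hvb.imp id fun h => by simp [hvrdef, h]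
  have hvai : Real.sin a = 0 ∨ vi a = 0 := hva.imp id fun h => by simp [hvidef, h]
  have hvbi : Real.sin b = 0 ∨ vi b = 0 := hvb.imp id fun h => by simp [hvidef, h]
  have Hr := core a b ha hb hab vr (fun y hy => (hdr y hy).differentiableAt) hAr hvar hvbr
  have Hi := core a b ha hb hab vi (fun y hy => (hdi y hy).differentiableAt) hAi hvai hvbi
  have hvrc : ContinuousOn vr (Set.Icc a b) := Complex.continuous_re.comp_continuousOn hvcont
  have hvic : ContinuousOn vi (Set.Icc a b) := Complex.continuous_im.comp_continuousOn hvcont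
  have hBr : IntegrableOn (fun y => vr y ^ 2 * Real.sin y ^ 2) (Set.Ioo a b) :=
    ((hvrc.pow 2).mul (Real.continuous_sin.continuousOn.pow 2)).integrableOn_Icc.mono_set
      Set.Ioo_subset_Icc_self
  have hBi : IntegrableOn (fun y => vi y ^ 2 * Real.sin y ^ 2) (Set.Ioo a b) :=
    ((hvic.pow 2).mul (Real.continuous_sin.continuousOn.pow 2)).integrableOn_Icc.mono_set
      Set.Ioo_subset_Icc_self
  have hsplitv : ∫ y in Set.Ioo a b, ‖v y‖ ^ 2 * Real.sin y ^ 2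
      = (∫ y in Set.Ioo a b, vr y ^ 2 * Real.sin y ^ 2)
        + ∫ y in Set.Ioo a b, vi y ^ 2 * Real.sin y ^ 2 := by
    rw [← MeasureTheory.integral_add hBr hBi]
    apply MeasureTheory.setIntegral_congr_fun measurableSet_Ioo
    intro y _
    simp only [hvrdef, hvidef]
    rw [normsq_c]
    ring
  have hsplitd : ∫ y in Set.Ioo a b, ‖deriv v y‖ ^ 2 * Real.sin y ^ 2
      = (∫ y in Set.Ioo a b, (deriv vr y) ^ 2 * Real.sin y ^ 2)
        + ∫ y in Set.Ioo a b, (deriv vi y) ^ 2 * Real.sin y ^ 2 := by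
    rw [← MeasureTheory.integral_add hAr hAi]
    apply MeasureTheory.setIntegral_congr_fun measurableSet_Ioo
    intro y hy
    simp only
    rw [normsq_c, hdrv y (Set.Ioo_subset_Icc_self hy), hdiv y (Set.Ioo_subset_Icc_self hy)]
    ring
  rw [hsplitv, hsplitd, mul_add]
  exact add_le_add Hr Hi


end WeightedPoincareAux

open Set Filter Topology intervalIntegral in
set_option maxHeartbeats 1000000 in
/-- Weighted Poincaré inequality with weight `sin² y` on `(0, π)` for `H¹` functions
vanishing at an interior point `y₀`. -/
theorem weighted_poincare_sin_sq (y₀ : ℝ) (hy₀ : y₀ ∈ Set.Ioo 0 π) (v : ℝ → ℂ)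
    (hv_diff : ∀ y ∈ Set.Icc 0 π, DifferentiableAt ℝ v y)
    (hv_deriv_L2 : IntegrableOn (fun y => ‖deriv v y‖ ^ 2 * (sin y) ^ 2) (Set.Ioo 0 π))
    (hv0 : v y₀ = 0) :
    ∫ y in Set.Ioo 0 π, ‖v y‖ ^ 2 * (sin y) ^ 2
      ≤ (π ^ 2 * min (y₀ ^ (-2 : ℤ)) ((π - y₀) ^ (-2 : ℤ)) - 1)⁻¹ *
        ∫ y in Set.Ioo 0 π, ‖deriv v y‖ ^ 2 * (sin y) ^ 2 := by
  obtain ⟨hy1, hy2⟩ := hy₀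
  have hπ := Real.pi_pos
  have hsub1 : Set.Ioo 0 y₀ ⊆ Set.Ioo 0 π := Set.Ioo_subset_Ioo le_rfl hy2.le
  have hsub2 : Set.Ioo y₀ π ⊆ Set.Ioo 0 π := Set.Ioo_subset_Ioo hy1.le le_rfl
  have hc1 : π ^ 2 * (y₀ : ℝ) ^ (-2:ℤ) = (π / y₀) ^ 2 := by
    rw [div_pow, zpow_neg, div_eq_mul_inv]
    congr 1
  have hc2 : π ^ 2 * (π - y₀) ^ (-2:ℤ) = (π / (π - y₀)) ^ 2 := by
    rw [div_pow, zpow_neg, div_eq_mul_inv]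
    congr 1
  have hmin : π ^ 2 * min (y₀ ^ (-2 : ℤ)) ((π - y₀) ^ (-2 : ℤ))
      = min ((π / y₀) ^ 2) ((π / (π - y₀)) ^ 2) := by
    rw [mul_min_of_nonneg _ _ (by positivity), hc1, hc2]
  set c₃ : ℝ := π ^ 2 * min (y₀ ^ (-2 : ℤ)) ((π - y₀) ^ (-2 : ℤ)) - 1 with hc₃def
  have hlc : 1 < (π / y₀) ^ 2 := by
    have h1 : 1 < π / y₀ := (one_lt_div hy1).2 hy2
    nlinarith
  have hrc : 1 < (π / (π - y₀)) ^ 2 := by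
    have h0 : 0 < π - y₀ := sub_pos.2 hy2
    have h1 : 1 < π / (π - y₀) := (one_lt_div h0).2 (by linarith)
    nlinarith
  have hc₃pos : 0 < c₃ := by
    rw [hc₃def, hmin]
    rcases min_cases ((π / y₀) ^ 2) ((π / (π - y₀)) ^ 2) with ⟨h, _⟩ | ⟨h, _⟩ <;>
      rw [h] <;> linarith
  have hc₃l : c₃ ≤ (π / (y₀ - 0)) ^ 2 - 1 := by
    rw [hc₃def, hmin, sub_zero]
    have := min_le_left ((π / y₀) ^ 2) ((π / (π - y₀)) ^ 2)
    linarith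
  have hc₃r : c₃ ≤ (π / (π - y₀)) ^ 2 - 1 := by
    rw [hc₃def, hmin]
    have := min_le_right ((π / y₀) ^ 2) ((π / (π - y₀)) ^ 2)
    linarith
  have H1 := coreC 0 y₀ le_rfl hy2.le hy1 v hv_diff (hv_deriv_L2.mono_set hsub1)
    (Or.inl Real.sin_zero) (Or.inr hv0)
  have H2 := coreC y₀ π hy1.le le_rfl hy2 v hv_diff (hv_deriv_L2.mono_set hsub2)
    (Or.inr hv0) (Or.inl Real.sin_pi)
  have hvcont : ContinuousOn v (Set.Icc 0 π) := fun y hy =>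
    (hv_diff y hy).continuousAt.continuousWithinAt
  have hB : IntegrableOn (fun y => ‖v y‖ ^ 2 * Real.sin y ^ 2) (Set.Ioo 0 π) :=
    ((hvcont.norm.pow 2).mul (Real.continuous_sin.continuousOn.pow 2)).integrableOn_Icc.mono_set
      Set.Ioo_subset_Icc_self
  have hsplit : ∀ f : ℝ → ℝ, IntegrableOn f (Set.Ioo 0 π) →
      ∫ y in Set.Ioo 0 π, f y = (∫ y in Set.Ioo 0 y₀, f y) + ∫ y in Set.Ioo y₀ π, f y := by
    intro f hf
    have hIoc1 : IntegrableOn f (Set.Ioc 0 y₀) :=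
      hf.mono_set fun y hy => ⟨hy.1, lt_of_le_of_lt hy.2 hy2⟩
    have hIoc2 : IntegrableOn f (Set.Ioc y₀ π) :=
      (hf.mono_set hsub2).congr_set_ae Ioo_ae_eq_Ioc.symm
    calc ∫ y in Set.Ioo 0 π, f y = ∫ y in Set.Ioc 0 π, f y :=
          (MeasureTheory.integral_Ioc_eq_integral_Ioo).symm
      _ = ∫ y in Set.Ioc 0 y₀ ∪ Set.Ioc y₀ π, f y := by
          rw [Set.Ioc_union_Ioc_eq_Ioc hy1.le hy2.le]
      _ = (∫ y in Set.Ioc 0 y₀, f y) + ∫ y in Set.Ioc y₀ π, f y :=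
          MeasureTheory.setIntegral_union (Set.Ioc_disjoint_Ioc_of_le le_rfl) measurableSet_Ioc hIoc1 hIoc2
      _ = (∫ y in Set.Ioo 0 y₀, f y) + ∫ y in Set.Ioo y₀ π, f y := by
          rw [MeasureTheory.integral_Ioc_eq_integral_Ioo,
            MeasureTheory.integral_Ioc_eq_integral_Ioo]
  have hI1nn : 0 ≤ ∫ y in Set.Ioo 0 y₀, ‖v y‖ ^ 2 * Real.sin y ^ 2 :=
    MeasureTheory.setIntegral_nonneg measurableSet_Ioo fun y _ => by positivity
  have hI2nn : 0 ≤ ∫ y in Set.Ioo y₀ π, ‖v y‖ ^ 2 * Real.sin y ^ 2 :=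
    MeasureTheory.setIntegral_nonneg measurableSet_Ioo fun y _ => by positivity
  have key : c₃ * ∫ y in Set.Ioo 0 π, ‖v y‖ ^ 2 * Real.sin y ^ 2
      ≤ ∫ y in Set.Ioo 0 π, ‖deriv v y‖ ^ 2 * Real.sin y ^ 2 := by
    rw [hsplit _ hB, hsplit _ hv_deriv_L2, mul_add]
    have e1 : c₃ * ∫ y in Set.Ioo 0 y₀, ‖v y‖ ^ 2 * Real.sin y ^ 2
        ≤ ((π / (y₀ - 0)) ^ 2 - 1) * ∫ y in Set.Ioo 0 y₀, ‖v y‖ ^ 2 * Real.sin y ^ 2 :=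
      mul_le_mul_of_nonneg_right hc₃l hI1nn
    have e2 : c₃ * ∫ y in Set.Ioo y₀ π, ‖v y‖ ^ 2 * Real.sin y ^ 2
        ≤ ((π / (π - y₀)) ^ 2 - 1) * ∫ y in Set.Ioo y₀ π, ‖v y‖ ^ 2 * Real.sin y ^ 2 :=
      mul_le_mul_of_nonneg_right hc₃r hI2nn
    exact add_le_add (e1.trans H1) (e2.trans H2)
  rw [inv_mul_eq_div, le_div_iff₀ hc₃pos]
  linarith [key]
end

section
/- Let y₀ ∈ (0, π). For every v ∈ H₀^1(0, π) with v(y₀) = 0, the inequality ∫₀^π |v(y)|²/(y − y₀)² dy ≤ c₁₃ (∫₀^π |v'(y)|² dy − ∫₀^π |v(y)|² dy) holds, where c₁₃ = 4π²/(π² − max{y₀², (π − y₀)²}). -/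
open MeasureTheory Real

open Set intervalIntegral Filter

lemma core_s6 (v : ℝ → ℂ) (g g' : ℝ → ℝ) (c d : ℝ) (hcd : c ≤ d)
    (hv : ∀ y ∈ Set.Icc c d, DifferentiableAt ℝ v y)
    (hg : ∀ y ∈ Set.Ioo c d, HasDerivAt g (g' y) y)
    (hgc : ContinuousOn g (Set.Icc c d))
    (hg'i : IntervalIntegrable g' volume c d)
    (hL2 : IntervalIntegrable (fun y => ‖deriv v y‖ ^ 2) volume c d) :
    g d * ‖v d‖ ^ 2 - g c * ‖v c‖ ^ 2 + ∫ y in c..d, (-(g' y) - g y ^ 2) * ‖v y‖ ^ 2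
      ≤ ∫ y in c..d, ‖deriv v y‖ ^ 2 := by
  have huv : Set.uIcc c d = Set.Icc c d := Set.uIcc_of_le hcd
  have huo : Set.uIoc c d = Set.Ioc c d := Set.uIoc_of_le hcd
  set F : ℝ → ℝ := fun y => ‖v y‖ ^ 2 with hF
  set F' : ℝ → ℝ := fun y => 2 * (inner ℝ (v y) (deriv v y) : ℝ) with hF'
  have hvc : ContinuousOn v (Set.Icc c d) := fun y hy => (hv y hy).continuousAt.continuousWithinAt
  have hFc : ContinuousOn F (Set.Icc c d) := (hvc.norm.pow 2)
  have hFd : ∀ y ∈ Set.Ioo c d, HasDerivAt F (F' y) y := fun y hy =>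
    ((hv y (Set.mem_Icc_of_Ioo hy)).hasDerivAt).norm_sq
  -- measurability of F'
  have hvm : AEStronglyMeasurable v (volume.restrict (Set.Ioc c d)) :=
    (hvc.mono Set.Ioc_subset_Icc_self).aestronglyMeasurable measurableSet_Ioc
  have hdm : AEStronglyMeasurable (deriv v) (volume.restrict (Set.Ioc c d)) :=
    (stronglyMeasurable_deriv v).aestronglyMeasurable.restrict
  have hF'm : AEStronglyMeasurable F' (volume.restrict (Set.Ioc c d)) :=
    aestronglyMeasurable_const.mul (hvm.inner hdm)
  obtain ⟨M, hM⟩ : ∃ M, ∀ y ∈ Set.Icc c d, ‖v y‖ ≤ M :=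
    isCompact_Icc.exists_bound_of_continuousOn hvc
  have hL2' : IntegrableOn (fun y => ‖deriv v y‖ ^ 2) (Set.Ioc c d) := by
    have := intervalIntegrable_iff.1 hL2; rwa [huo] at this
  have hF'i : IntervalIntegrable F' volume c d := by
    rw [intervalIntegrable_iff, huo]
    refine Integrable.mono' (g := fun y => (|M| + 1) * (1 + ‖deriv v y‖ ^ 2)) ?_ hF'm ?_
    · exact (((integrableOn_const measure_Ioc_lt_top.ne).add hL2').const_mul _)
    · refine (ae_restrict_iff' measurableSet_Ioc).2 (Eventually.of_forall fun y hy => ?_)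
      have hy' : y ∈ Set.Icc c d := Set.Ioc_subset_Icc_self hy
      have h1 : |(inner ℝ (v y) (deriv v y) : ℝ)| ≤ ‖v y‖ * ‖deriv v y‖ := abs_real_inner_le_norm _ _
      have h2 : ‖v y‖ ≤ M := hM y hy'
      have h3 : (0:ℝ) ≤ ‖v y‖ := norm_nonneg _
      have h4 : (0:ℝ) ≤ ‖deriv v y‖ := norm_nonneg _
      have h5 : M ≤ |M| := le_abs_self M
      have : ‖F' y‖ = 2 * |(inner ℝ (v y) (deriv v y) : ℝ)| := by
        simp [hF', abs_mul]
      rw [this]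
      nlinarith [mul_le_mul_of_nonneg_right (h2.trans h5) h4, mul_nonneg (abs_nonneg M) (sq_nonneg (1 - ‖deriv v y‖)), sq_nonneg (1 - ‖deriv v y‖)]
  -- integration by parts
  have hparts : ∫ y in c..d, g y * F' y
      = g d * F d - g c * F c - ∫ y in c..d, g' y * F y := by
    apply integral_mul_deriv_eq_deriv_mul_of_hasDerivAt
    · rwa [huv]
    · rwa [huv]
    · rw [min_eq_left hcd, max_eq_right hcd]; exact hg
    · rw [min_eq_left hcd, max_eq_right hcd]; exact hFd
    · exact hg'i
    · exact hF'i
  -- pointwise inequality integrated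
  have hgF'i : IntervalIntegrable (fun y => g y * F' y) volume c d :=
    hF'i.continuousOn_mul (by rw [huv]; exact hgc)
  have hg2Fi : IntervalIntegrable (fun y => g y ^ 2 * F y) volume c d :=
    (((hgc.pow 2).mul hFc).mono (by rw [huv])).intervalIntegrable
  have hg'Fi : IntervalIntegrable (fun y => g' y * F y) volume c d :=
    hg'i.mul_continuousOn (by rw [huv]; exact hFc)
  have key : ∀ y ∈ Set.Icc c d, g y * F' y - g y ^ 2 * F y ≤ ‖deriv v y‖ ^ 2 := by
    intro y hy
    have h1 : |(inner ℝ (v y) (deriv v y) : ℝ)| ≤ ‖v y‖ * ‖deriv v y‖ := abs_real_inner_le_norm _ _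
    have h2 : g y * (2 * (inner ℝ (v y) (deriv v y) : ℝ)) ≤ 2 * |g y| * (‖v y‖ * ‖deriv v y‖) := by
      have := le_abs_self (g y * (inner ℝ (v y) (deriv v y) : ℝ))
      rw [abs_mul] at this
      nlinarith [abs_nonneg (g y)]
    have hFy : F y = ‖v y‖ ^ 2 := rfl
    have hF'y : F' y = 2 * (inner ℝ (v y) (deriv v y) : ℝ) := rfl
    rw [hFy, hF'y]
    nlinarith [sq_nonneg (|g y| * ‖v y‖ - ‖deriv v y‖), sq_abs (g y), abs_nonneg (g y),
      norm_nonneg (v y), norm_nonneg (deriv v y)]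
  have e1 : ∫ y in c..d, (-(g' y) - g y ^ 2) * F y
      = (-(∫ y in c..d, g' y * F y)) - ∫ y in c..d, g y ^ 2 * F y := by
    have : (fun y => (-(g' y) - g y ^ 2) * F y)
        = fun y => (-(g' y * F y)) - g y ^ 2 * F y := by funext y; ring
    rw [this]
    have h := intervalIntegral.integral_sub hg'Fi.neg hg2Fi
    simp only [Pi.neg_apply] at h
    rw [h, intervalIntegral.integral_neg]
  have e2 : ∫ y in c..d, (g y * F' y - g y ^ 2 * F y)
      = (∫ y in c..d, g y * F' y) - ∫ y in c..d, g y ^ 2 * F y :=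
    intervalIntegral.integral_sub hgF'i hg2Fi
  have e3 : ∫ y in c..d, (g y * F' y - g y ^ 2 * F y) ≤ ∫ y in c..d, ‖deriv v y‖ ^ 2 :=
    intervalIntegral.integral_mono_on hcd (hgF'i.sub hg2Fi) hL2 key
  have : g d * ‖v d‖ ^ 2 - g c * ‖v c‖ ^ 2 + ∫ y in c..d, (-(g' y) - g y ^ 2) * ‖v y‖ ^ 2
      = ∫ y in c..d, (g y * F' y - g y ^ 2 * F y) := by
    rw [e2]
    have hFd' : F d = ‖v d‖ ^ 2 := rfl
    have hFc' : F c = ‖v c‖ ^ 2 := rfl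
    rw [← hFd', ← hFc']
    have : (∫ y in c..d, (-(g' y) - g y ^ 2) * ‖v y‖ ^ 2)
        = (∫ y in c..d, (-(g' y) - g y ^ 2) * F y) := rfl
    rw [this, e1]
    linarith [hparts]
  linarith [this ▸ e3]

lemma subint (v : ℝ → ℂ) (a b : ℝ) (hab : a < b)
    (hv : ∀ y ∈ Set.Icc a b, DifferentiableAt ℝ v y) (hva : v a = 0) (hvb : v b = 0)
    (hL2 : IntegrableOn (fun y => ‖deriv v y‖ ^ 2) (Set.Ioo a b))
    (q g g' : ℝ → ℝ)
    (hg : ∀ y ∈ Set.Ioo a b, HasDerivAt g (g' y) y)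
    (hgc : ContinuousOn g (Set.Ioo a b))
    (hg'c : ContinuousOn g' (Set.Ioo a b))
    (hq : ∀ y ∈ Set.Ioo a b, q y = -(g' y) - g y ^ 2)
    (hq0 : ∀ y ∈ Set.Ioo a b, 0 ≤ q y)
    (hqm : Measurable q)
    (C δ : ℝ) (hδ : 0 < δ) (hδ2 : δ ≤ (b - a) / 2)
    (hbd : ∀ ε ∈ Set.Ioo (0:ℝ) δ, |g (a + ε)| ≤ C / ε ∧ |g (b - ε)| ≤ C / ε) :
    IntegrableOn (fun y => q y * ‖v y‖ ^ 2) (Set.Ioo a b) ∧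
      (∫ y in Set.Ioo a b, q y * ‖v y‖ ^ 2) ≤ ∫ y in Set.Ioo a b, ‖deriv v y‖ ^ 2 := by
  set F : ℝ → ℝ := fun y => ‖v y‖ ^ 2 with hF
  set D : ℝ := ∫ y in Set.Ioo a b, ‖deriv v y‖ ^ 2 with hD
  have hD0 : 0 ≤ D := setIntegral_nonneg measurableSet_Ioo (fun y _ => sq_nonneg _)
  have hvc : ContinuousOn v (Set.Icc a b) := fun y hy => (hv y hy).continuousAt.continuousWithinAt
  have hFc : ContinuousOn F (Set.Icc a b) := hvc.norm.pow 2
  -- Step 1 : boundary bounds from differentiability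
  have ha' : a ∈ Set.Icc a b := ⟨le_refl a, hab.le⟩
  have hb' : b ∈ Set.Icc a b := ⟨hab.le, le_refl b⟩
  obtain ⟨Ka, hKa0, hKa⟩ := ((hv a ha').isBigO_sub).exists_pos
  obtain ⟨Kb, hKb0, hKb⟩ := ((hv b hb').isBigO_sub).exists_pos
  obtain ⟨δa, hδa0, hδa⟩ := Metric.eventually_nhds_iff.1 hKa.bound
  obtain ⟨δb, hδb0, hδb⟩ := Metric.eventually_nhds_iff.1 hKb.bound
  have hva' : ∀ ε : ℝ, 0 < ε → ε < δa → ‖v (a + ε)‖ ≤ Ka * ε := by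
    intro ε hε hεδ
    have h1 : dist (a + ε) a < δa := by
      rw [Real.dist_eq]; rw [abs_of_pos (by linarith : (0:ℝ) < a + ε - a)]; linarith
    have h2 := hδa h1
    rw [hva, sub_zero] at h2
    have h3 : ‖a + ε - a‖ = ε := by
      rw [show a + ε - a = ε by ring, Real.norm_eq_abs, abs_of_pos hε]
    rwa [h3] at h2
  have hvb' : ∀ ε : ℝ, 0 < ε → ε < δb → ‖v (b - ε)‖ ≤ Kb * ε := by
    intro ε hε hεδ
    have h1 : dist (b - ε) b < δb := by
      rw [Real.dist_eq]; rw [abs_of_neg (by linarith : b - ε - b < 0)]; linarith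
    have h2 := hδb h1
    rw [hvb, sub_zero] at h2
    have h3 : ‖b - ε - b‖ = ε := by
      rw [show b - ε - b = -ε by ring, norm_neg, Real.norm_eq_abs, abs_of_pos hε]
    rwa [h3] at h2
  -- Step 2 : truncated inequality
  set E : ℝ := C * Ka ^ 2 + C * Kb ^ 2 with hE
  have step2 : ∀ ε : ℝ, 0 < ε → ε < δ → ε < δa → ε < δb →
      (∫ y in Set.Ioc (a + ε) (b - ε), q y * ‖v y‖ ^ 2) ≤ D + E * ε := by
    intro ε hε h1 h2 h3
    set c := a + ε with hc
    set d := b - ε with hd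
    have hcd : c ≤ d := by simp only [hc, hd]; linarith
    have hac : a < c := by simp only [hc]; linarith
    have hdb : d < b := by simp only [hd]; linarith
    have hsub1 : Set.Icc c d ⊆ Set.Icc a b := Set.Icc_subset_Icc (by linarith) (by linarith)
    have hsub2 : Set.Icc c d ⊆ Set.Ioo a b := Set.Icc_subset_Ioo hac hdb
    have hsub3 : Set.Ioo c d ⊆ Set.Ioo a b := Set.Ioo_subset_Ioo hac.le hdb.le
    have huv : Set.uIcc c d = Set.Icc c d := Set.uIcc_of_le hcd
    have hL2cd : IntervalIntegrable (fun y => ‖deriv v y‖ ^ 2) volume c d := by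
      rw [intervalIntegrable_iff, Set.uIoc_of_le hcd]
      exact hL2.mono_set (Set.Ioc_subset_Icc_self.trans hsub2)
    have hcore := core_s6 v g g' c d hcd (fun y hy => hv y (hsub1 hy))
      (fun y hy => hg y (hsub3 hy)) (hgc.mono hsub2)
      (((hg'c.mono hsub2).mono (by rw [huv])).intervalIntegrable) hL2cd
    -- rewrite integrand as q
    have hcong : (∫ y in c..d, (-(g' y) - g y ^ 2) * ‖v y‖ ^ 2)
        = ∫ y in c..d, q y * ‖v y‖ ^ 2 := by
      apply intervalIntegral.integral_congr
      intro y hy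
      rw [huv] at hy
      show (-(g' y) - g y ^ 2) * ‖v y‖ ^ 2 = q y * ‖v y‖ ^ 2
      rw [hq y (hsub2 hy)]
    rw [hcong] at hcore
    -- bound the right side by D
    have hrhs : (∫ y in c..d, ‖deriv v y‖ ^ 2) ≤ D := by
      rw [intervalIntegral.integral_of_le hcd]
      apply setIntegral_mono_set hL2
      · exact (ae_restrict_iff' measurableSet_Ioo).2 (Filter.Eventually.of_forall fun y _ => sq_nonneg _)
      · exact HasSubset.Subset.eventuallyLE (Set.Ioc_subset_Icc_self.trans hsub2)
    -- bound the boundary terms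
    have hFc' : ‖v c‖ ^ 2 ≤ Ka ^ 2 * ε ^ 2 := by
      have h := pow_le_pow_left₀ (norm_nonneg _) (hva' ε hε h2) 2
      rwa [mul_pow] at h
    have hFd' : ‖v d‖ ^ 2 ≤ Kb ^ 2 * ε ^ 2 := by
      have h := pow_le_pow_left₀ (norm_nonneg _) (hvb' ε hε h3) 2
      rwa [mul_pow] at h
    obtain ⟨hgc', hgd'⟩ := hbd ε ⟨hε, h1⟩
    have hC0 : 0 ≤ C / ε := le_trans (abs_nonneg _) hgc'
    have hbd1 : g c * ‖v c‖ ^ 2 ≤ C * Ka ^ 2 * ε := by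
      have habs : g c * ‖v c‖ ^ 2 ≤ |g c| * ‖v c‖ ^ 2 :=
        mul_le_mul_of_nonneg_right (le_abs_self _) (sq_nonneg _)
      have h4 : |g c| * ‖v c‖ ^ 2 ≤ (C / ε) * (Ka ^ 2 * ε ^ 2) :=
        mul_le_mul hgc' hFc' (sq_nonneg _) hC0
      have h5 : (C / ε) * (Ka ^ 2 * ε ^ 2) = C * Ka ^ 2 * ε := by
        field_simp
      linarith
    have hbd2 : -(g d * ‖v d‖ ^ 2) ≤ C * Kb ^ 2 * ε := by
      have habs : -(g d * ‖v d‖ ^ 2) ≤ |g d| * ‖v d‖ ^ 2 := by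
        rw [← abs_neg (g d), ← neg_mul]
        exact mul_le_mul_of_nonneg_right (le_abs_self _) (sq_nonneg _)
      have h4 : |g d| * ‖v d‖ ^ 2 ≤ (C / ε) * (Kb ^ 2 * ε ^ 2) :=
        mul_le_mul hgd' hFd' (sq_nonneg _) hC0
      have h5 : (C / ε) * (Kb ^ 2 * ε ^ 2) = C * Kb ^ 2 * ε := by
        field_simp
      linarith
    have hfin : (∫ y in c..d, q y * ‖v y‖ ^ 2) ≤ D + E * ε := by
      have h6 : E * ε = C * Ka ^ 2 * ε + C * Kb ^ 2 * ε := by rw [hE]; ring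
      linarith [hcore, hrhs, hbd1, hbd2]
    rw [intervalIntegral.integral_of_le hcd] at hfin
    exact hfin
  have hqcont : ContinuousOn q (Set.Ioo a b) :=
    ((hg'c.neg).sub (hgc.pow 2)).congr (fun y hy => hq y hy)
  have hQcont : ContinuousOn (fun y => q y * ‖v y‖ ^ 2) (Set.Ioo a b) :=
    hqcont.mul ((hFc.mono Set.Ioo_subset_Icc_self))
  -- Step 3 : uniform bound on compact subintervals
  have step3 : ∀ s t : ℝ, a < s → t < b → (∫ y in Set.Ioc s t, q y * ‖v y‖ ^ 2) ≤ D := by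
    intro s t hs ht
    rcases le_or_gt t s with hts | hst
    · rw [Set.Ioc_eq_empty (not_lt.2 hts)]
      simpa using hD0
    · refine le_of_forall_pos_le_add ?_
      intro η hη
      set m : ℝ := min (min δ (min δa δb)) (min (min (s - a) (b - t)) (η / (|E| + 1))) with hm
      have hm0 : 0 < m := by
        refine lt_min (lt_min hδ (lt_min hδa0 hδb0)) (lt_min (lt_min ?_ ?_) ?_)
        · linarith
        · linarith
        · positivity
      set ε : ℝ := m / 2 with hε
      have hε0 : 0 < ε := by positivity
      have hεm : ε < m := by simp only [hε]; linarith
      have hεδ : ε < δ := lt_of_lt_of_le hεm (le_trans (min_le_left _ _) (min_le_left _ _))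
      have hεa : ε < δa := lt_of_lt_of_le hεm
        (le_trans (min_le_left _ _) (le_trans (min_le_right _ _) (min_le_left _ _)))
      have hεb : ε < δb := lt_of_lt_of_le hεm
        (le_trans (min_le_left _ _) (le_trans (min_le_right _ _) (min_le_right _ _)))
      have hεs : ε < s - a := lt_of_lt_of_le hεm
        (le_trans (min_le_right _ _) (le_trans (min_le_left _ _) (min_le_left _ _)))
      have hεt : ε < b - t := lt_of_lt_of_le hεm
        (le_trans (min_le_right _ _) (le_trans (min_le_left _ _) (min_le_right _ _)))
      have hεη : ε < η / (|E| + 1) := lt_of_lt_of_le hεm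
        (le_trans (min_le_right _ _) (min_le_right _ _))
      have hkey := step2 ε hε0 hεδ hεa hεb
      have hab2 : ε < (b - a) / 2 := lt_of_lt_of_le hεδ hδ2
      have hIccsub : Set.Icc (a + ε) (b - ε) ⊆ Set.Ioo a b :=
        Set.Icc_subset_Ioo (by linarith) (by linarith)
      have hInt : IntegrableOn (fun y => q y * ‖v y‖ ^ 2) (Set.Icc (a + ε) (b - ε)) :=
        (hQcont.mono hIccsub).integrableOn_Icc
      have hmono : (∫ y in Set.Ioc s t, q y * ‖v y‖ ^ 2)
          ≤ ∫ y in Set.Ioc (a + ε) (b - ε), q y * ‖v y‖ ^ 2 := by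
        apply setIntegral_mono_set (hInt.mono_set Set.Ioc_subset_Icc_self)
        · refine (ae_restrict_iff' measurableSet_Ioc).2 (Filter.Eventually.of_forall fun y hy => ?_)
          have : y ∈ Set.Ioo a b := hIccsub (Set.Ioc_subset_Icc_self hy)
          exact mul_nonneg (hq0 y this) (sq_nonneg _)
        · exact HasSubset.Subset.eventuallyLE (Set.Ioc_subset_Ioc (by linarith) (by linarith))
      have hEε : E * ε ≤ η := by
        have h1 : E * ε ≤ |E| * ε := mul_le_mul_of_nonneg_right (le_abs_self _) hε0.le
        have h2 : |E| * ε ≤ |E| * (η / (|E| + 1)) :=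
          mul_le_mul_of_nonneg_left hεη.le (abs_nonneg _)
        have h3 : |E| * (η / (|E| + 1)) ≤ η := by
          have h4 : (0:ℝ) < |E| + 1 := by positivity
          rw [mul_div_assoc', div_le_iff₀ h4]
          nlinarith [abs_nonneg E]
        linarith
      linarith [hmono, hkey]
  -- Step 4 : monotone convergence
  set μ := volume.restrict (Set.Ioo a b) with hμ
  set Q : ℝ → ℝ := fun y => q y * ‖v y‖ ^ 2 with hQ
  set h : ℝ → ENNReal := fun y => ENNReal.ofReal (Q y) with hh
  set r : ℝ := (b - a) / 4 with hr
  have hr0 : 0 < r := by simp only [hr]; linarith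
  set sn : ℕ → ℝ := fun n => a + r / (n + 1) with hsn
  set tn : ℕ → ℝ := fun n => b - r / (n + 1) with htn
  have hrn : ∀ n : ℕ, 0 < r / (n + 1) ∧ r / (n + 1) ≤ r := by
    intro n
    constructor
    · positivity
    · rw [div_le_iff₀ (by positivity : (0:ℝ) < (n:ℝ) + 1)]
      nlinarith [Nat.cast_nonneg (α := ℝ) n]
  have hsn_mem : ∀ n : ℕ, a < sn n ∧ tn n < b ∧ sn n ≤ tn n := by
    intro n
    obtain ⟨h1, h2⟩ := hrn n
    refine ⟨by simp only [hsn]; linarith, by simp only [htn]; linarith, ?_⟩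
    simp only [hsn, htn, hr] at *
    linarith
  have hIccsub : ∀ n : ℕ, Set.Icc (sn n) (tn n) ⊆ Set.Ioo a b := by
    intro n
    obtain ⟨h1, h2, _⟩ := hsn_mem n
    exact Set.Icc_subset_Ioo h1 h2
  set f : ℕ → ℝ → ENNReal := fun n => (Set.Icc (sn n) (tn n)).indicator h with hf
  -- measurability
  have hvam : AEMeasurable v μ := by
    have h1 : AEMeasurable v (volume.restrict (Set.Icc a b)) :=
      hvc.aemeasurable measurableSet_Icc
    exact h1.mono_measure (Measure.restrict_mono Set.Ioo_subset_Icc_self le_rfl)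
  have hQam : AEMeasurable Q μ := by
    have h2 : AEMeasurable (fun y => ‖v y‖ ^ 2) μ := (hvam.norm).pow_const 2
    exact (hqm.aemeasurable).mul h2
  have hham : AEMeasurable h μ := hQam.ennreal_ofReal
  have hfm : ∀ n, AEMeasurable (f n) μ := fun n => hham.indicator measurableSet_Icc
  -- monotonicity
  have hmono : ∀ y, Monotone fun n => f n y := by
    intro y i j hij
    apply Set.indicator_le_indicator_of_subset
    · apply Set.Icc_subset_Icc
      · simp only [hsn]
        have : r / ((j:ℝ) + 1) ≤ r / ((i:ℝ) + 1) := by gcongr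
        linarith
      · simp only [htn]
        have : r / ((j:ℝ) + 1) ≤ r / ((i:ℝ) + 1) := by gcongr
        linarith
    · exact fun x => zero_le
  -- the supremum is h on Ioo a b
  have hsup : ∀ y ∈ Set.Ioo a b, (⨆ n, f n y) = h y := by
    intro y hy
    obtain ⟨hy1, hy2⟩ := hy
    set m' : ℝ := min (y - a) (b - y) with hm'
    have hm'0 : 0 < m' := lt_min (by linarith) (by linarith)
    obtain ⟨n, hn⟩ := exists_nat_gt (r / m')
    have hrm : r / ((n:ℝ) + 1) < m' := by
      rw [div_lt_iff₀ (by positivity : (0:ℝ) < (n:ℝ) + 1)]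
      rw [div_lt_iff₀ hm'0] at hn
      nlinarith [hm'0]
    have hymem : y ∈ Set.Icc (sn n) (tn n) := by
      constructor
      · simp only [hsn]
        have : m' ≤ y - a := min_le_left _ _
        linarith
      · simp only [htn]
        have : m' ≤ b - y := min_le_right _ _
        linarith
    apply le_antisymm
    · exact iSup_le fun k => Set.indicator_le_self _ _ y
    · refine le_iSup_of_le n ?_
      simp only [hf]
      rw [Set.indicator_of_mem hymem]
  -- lintegral bound
  have hlin : (∫⁻ y, h y ∂μ) ≤ ENNReal.ofReal D := by
    have he1 : (∫⁻ y, h y ∂μ) = ∫⁻ y, (⨆ n, f n y) ∂μ := by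
      apply lintegral_congr_ae
      refine ((ae_restrict_iff' measurableSet_Ioo).2 (Filter.Eventually.of_forall ?_))
      exact fun y hy => (hsup y hy).symm
    rw [he1, lintegral_iSup' hfm (Filter.Eventually.of_forall hmono)]
    refine iSup_le fun n => ?_
    rw [hf]
    rw [lintegral_indicator measurableSet_Icc]
    have he2 : μ.restrict (Set.Icc (sn n) (tn n)) = volume.restrict (Set.Icc (sn n) (tn n)) := by
      rw [hμ, Measure.restrict_restrict measurableSet_Icc]
      congr 1
      exact Set.inter_eq_left.2 (hIccsub n)
    rw [he2]
    have hInt : IntegrableOn Q (Set.Icc (sn n) (tn n)) :=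
      (hQcont.mono (hIccsub n)).integrableOn_Icc
    have hnn : 0 ≤ᵐ[volume.restrict (Set.Icc (sn n) (tn n))] Q := by
      refine (ae_restrict_iff' measurableSet_Icc).2 (Filter.Eventually.of_forall fun y hy => ?_)
      exact mul_nonneg (hq0 y (hIccsub n hy)) (sq_nonneg _)
    rw [hh, ← ofReal_integral_eq_lintegral_ofReal hInt hnn]
    apply ENNReal.ofReal_le_ofReal
    rw [integral_Icc_eq_integral_Ioc]
    exact step3 _ _ (hsn_mem n).1 (hsn_mem n).2.1
  -- conclude
  have hQsm : AEStronglyMeasurable Q μ := hQam.aestronglyMeasurable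
  have hnn' : 0 ≤ᵐ[μ] Q := by
    refine (ae_restrict_iff' measurableSet_Ioo).2 (Filter.Eventually.of_forall fun y hy => ?_)
    exact mul_nonneg (hq0 y hy) (sq_nonneg _)
  have hfi : Integrable Q μ := by
    refine ⟨hQsm, ?_⟩
    rw [hasFiniteIntegral_iff_ofReal hnn']
    exact lt_of_le_of_lt hlin ENNReal.ofReal_lt_top
  refine ⟨hfi, ?_⟩
  have he3 : (∫ y in Set.Ioo a b, q y * ‖v y‖ ^ 2) = ∫ y, Q y ∂μ := rfl
  rw [he3, integral_eq_lintegral_of_nonneg_ae hnn' hQsm]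
  calc (∫⁻ y, ENNReal.ofReal (Q y) ∂μ).toReal
      ≤ (ENNReal.ofReal D).toReal := ENNReal.toReal_mono ENNReal.ofReal_ne_top hlin
    _ = D := ENNReal.toReal_ofReal hD0

lemma hardy_left (v : ℝ → ℂ) (a b : ℝ) (hab : a < b)
    (hv : ∀ y ∈ Set.Icc a b, DifferentiableAt ℝ v y) (hva : v a = 0) (hvb : v b = 0)
    (hL2 : IntegrableOn (fun y => ‖deriv v y‖ ^ 2) (Set.Ioo a b)) :
    IntegrableOn (fun y => ‖v y‖ ^ 2 / (y - a) ^ 2) (Set.Ioo a b) ∧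
      (∫ y in Set.Ioo a b, ‖v y‖ ^ 2 / (y - a) ^ 2)
        ≤ 4 * ∫ y in Set.Ioo a b, ‖deriv v y‖ ^ 2 := by
  set q : ℝ → ℝ := fun y => (4 * (y - a) ^ 2)⁻¹ with hq'
  set g : ℝ → ℝ := fun y => (2 * (y - a))⁻¹ with hgdef
  set g' : ℝ → ℝ := fun y => -2 / (2 * (y - a)) ^ 2 with hg''
  have hgd : ∀ y ∈ Set.Ioo a b, HasDerivAt g (g' y) y := by
    intro y hy
    have h0 : 0 < y - a := sub_pos.2 hy.1
    have hne : 2 * (y - a) ≠ 0 := by positivity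
    have h1 : HasDerivAt (fun y : ℝ => 2 * (y - a)) 2 y := by
      simpa using ((hasDerivAt_id y).sub_const a).const_mul 2
    exact h1.inv hne
  have hgc : ContinuousOn g (Set.Ioo a b) := fun y hy =>
    ((hgd y hy).continuousAt).continuousWithinAt
  have hg'c : ContinuousOn g' (Set.Ioo a b) := by
    apply ContinuousOn.div continuousOn_const
    · exact ((continuousOn_id.sub continuousOn_const).const_smul (2:ℝ)).pow 2
    · intro y hy
      have h0 : 0 < y - a := sub_pos.2 hy.1
      positivity
  have hq : ∀ y ∈ Set.Ioo a b, q y = -(g' y) - g y ^ 2 := by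
    intro y hy
    have h0 : 0 < y - a := sub_pos.2 hy.1
    have hne : y - a ≠ 0 := h0.ne'
    simp only [hq', hgdef, hg'']
    field_simp
    ring
  have hq0 : ∀ y ∈ Set.Ioo a b, 0 ≤ q y := by
    intro y hy
    have h0 : 0 < y - a := sub_pos.2 hy.1
    positivity
  have hqm : Measurable q :=
    (measurable_const.mul ((measurable_id.sub_const a).pow_const 2)).inv
  have hbd : ∀ ε ∈ Set.Ioo (0:ℝ) ((b - a) / 2),
      |g (a + ε)| ≤ 1 / ε ∧ |g (b - ε)| ≤ 1 / ε := by
    rintro ε ⟨hε0, hεd⟩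
    constructor
    · have h1 : g (a + ε) = (2 * ε)⁻¹ := by simp [hgdef]
      rw [h1, abs_of_pos (by positivity), inv_eq_one_div]
      exact one_div_le_one_div_of_le hε0 (by linarith)
    · have h1 : g (b - ε) = (2 * (b - ε - a))⁻¹ := by simp [hgdef]
      have h2 : 0 < b - ε - a := by linarith
      rw [h1, abs_of_pos (by positivity), inv_eq_one_div]
      exact one_div_le_one_div_of_le hε0 (by linarith)
  obtain ⟨hint, hle⟩ := subint v a b hab hv hva hvb hL2 q g g' hgd hgc hg'c hq hq0 hqm
    1 ((b - a) / 2) (by linarith) (le_refl _) hbd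
  have hcong : Set.EqOn (fun y => 4 * (q y * ‖v y‖ ^ 2))
      (fun y => ‖v y‖ ^ 2 / (y - a) ^ 2) (Set.Ioo a b) := by
    intro y hy
    have h0 : 0 < y - a := sub_pos.2 hy.1
    have hne : y - a ≠ 0 := h0.ne'
    simp only [hq']
    field_simp
  constructor
  · exact IntegrableOn.congr_fun (hint.const_mul 4) hcong measurableSet_Ioo
  · calc (∫ y in Set.Ioo a b, ‖v y‖ ^ 2 / (y - a) ^ 2)
        = ∫ y in Set.Ioo a b, 4 * (q y * ‖v y‖ ^ 2) :=
          (setIntegral_congr_fun measurableSet_Ioo hcong).symm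
      _ = 4 * ∫ y in Set.Ioo a b, q y * ‖v y‖ ^ 2 := by rw [MeasureTheory.integral_const_mul]
      _ ≤ 4 * ∫ y in Set.Ioo a b, ‖deriv v y‖ ^ 2 := by linarith

lemma hardy_right (v : ℝ → ℂ) (a b : ℝ) (hab : a < b)
    (hv : ∀ y ∈ Set.Icc a b, DifferentiableAt ℝ v y) (hva : v a = 0) (hvb : v b = 0)
    (hL2 : IntegrableOn (fun y => ‖deriv v y‖ ^ 2) (Set.Ioo a b)) :
    IntegrableOn (fun y => ‖v y‖ ^ 2 / (y - b) ^ 2) (Set.Ioo a b) ∧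
      (∫ y in Set.Ioo a b, ‖v y‖ ^ 2 / (y - b) ^ 2)
        ≤ 4 * ∫ y in Set.Ioo a b, ‖deriv v y‖ ^ 2 := by
  set q : ℝ → ℝ := fun y => (4 * (y - b) ^ 2)⁻¹ with hq'
  set g : ℝ → ℝ := fun y => (2 * (y - b))⁻¹ with hgdef
  set g' : ℝ → ℝ := fun y => -2 / (2 * (y - b)) ^ 2 with hg''
  have hgd : ∀ y ∈ Set.Ioo a b, HasDerivAt g (g' y) y := by
    intro y hy
    have h0 : 0 < b - y := sub_pos.2 hy.2
    have hne : 2 * (y - b) ≠ 0 := by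
      intro h; nlinarith
    have h1 : HasDerivAt (fun y : ℝ => 2 * (y - b)) 2 y := by
      simpa using ((hasDerivAt_id y).sub_const b).const_mul 2
    exact h1.inv hne
  have hgc : ContinuousOn g (Set.Ioo a b) := fun y hy =>
    ((hgd y hy).continuousAt).continuousWithinAt
  have hg'c : ContinuousOn g' (Set.Ioo a b) := by
    apply ContinuousOn.div continuousOn_const
    · exact ((continuousOn_id.sub continuousOn_const).const_smul (2:ℝ)).pow 2
    · intro y hy
      have h0 : 0 < b - y := sub_pos.2 hy.2
      intro h; nlinarith
  have hq : ∀ y ∈ Set.Ioo a b, q y = -(g' y) - g y ^ 2 := by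
    intro y hy
    have h0 : 0 < b - y := sub_pos.2 hy.2
    have hne : y - b ≠ 0 := by intro h; nlinarith
    simp only [hq', hgdef, hg'']
    field_simp
    ring
  have hq0 : ∀ y ∈ Set.Ioo a b, 0 ≤ q y := by
    intro y hy
    have h0 : 0 < b - y := sub_pos.2 hy.2
    have h1 : y - b ≠ 0 := by intro h; nlinarith
    positivity
  have hqm : Measurable q :=
    (measurable_const.mul ((measurable_id.sub_const b).pow_const 2)).inv
  have hbd : ∀ ε ∈ Set.Ioo (0:ℝ) ((b - a) / 2),
      |g (a + ε)| ≤ 1 / ε ∧ |g (b - ε)| ≤ 1 / ε := by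
    rintro ε ⟨hε0, hεd⟩
    constructor
    · have h1 : g (a + ε) = (2 * (a + ε - b))⁻¹ := by simp [hgdef]
      have h2 : 0 < b - a - ε := by linarith
      have h3 : (2 * (a + ε - b)) < 0 := by linarith
      rw [h1, abs_of_neg (inv_neg''.2 h3), ← inv_neg, inv_eq_one_div]
      have h4 : -(2 * (a + ε - b)) = 2 * (b - a - ε) := by ring
      rw [h4]
      exact one_div_le_one_div_of_le hε0 (by linarith)
    · have h1 : g (b - ε) = (2 * (-ε))⁻¹ := by
        show (2 * (b - ε - b))⁻¹ = (2 * (-ε))⁻¹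
        norm_num
      have h3 : (2 * (-ε)) < 0 := by linarith
      rw [h1, abs_of_neg (inv_neg''.2 h3), ← inv_neg, inv_eq_one_div]
      have h4 : -(2 * (-ε)) = 2 * ε := by ring
      rw [h4]
      exact one_div_le_one_div_of_le hε0 (by linarith)
  obtain ⟨hint, hle⟩ := subint v a b hab hv hva hvb hL2 q g g' hgd hgc hg'c hq hq0 hqm
    1 ((b - a) / 2) (by linarith) (le_refl _) hbd
  have hcong : Set.EqOn (fun y => 4 * (q y * ‖v y‖ ^ 2))
      (fun y => ‖v y‖ ^ 2 / (y - b) ^ 2) (Set.Ioo a b) := by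
    intro y hy
    have h0 : 0 < b - y := sub_pos.2 hy.2
    have hne : y - b ≠ 0 := by intro h; nlinarith
    simp only [hq']
    field_simp
  constructor
  · exact IntegrableOn.congr_fun (hint.const_mul 4) hcong measurableSet_Ioo
  · calc (∫ y in Set.Ioo a b, ‖v y‖ ^ 2 / (y - b) ^ 2)
        = ∫ y in Set.Ioo a b, 4 * (q y * ‖v y‖ ^ 2) :=
          (setIntegral_congr_fun measurableSet_Ioo hcong).symm
      _ = 4 * ∫ y in Set.Ioo a b, q y * ‖v y‖ ^ 2 := by rw [MeasureTheory.integral_const_mul]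
      _ ≤ 4 * ∫ y in Set.Ioo a b, ‖deriv v y‖ ^ 2 := by linarith

lemma wirtinger_piece (v : ℝ → ℂ) (a b : ℝ) (hab : a < b)
    (hv : ∀ y ∈ Set.Icc a b, DifferentiableAt ℝ v y) (hva : v a = 0) (hvb : v b = 0)
    (hL2 : IntegrableOn (fun y => ‖deriv v y‖ ^ 2) (Set.Ioo a b)) :
    (π / (b - a)) ^ 2 * (∫ y in Set.Ioo a b, ‖v y‖ ^ 2)
      ≤ ∫ y in Set.Ioo a b, ‖deriv v y‖ ^ 2 := by
  have hba : 0 < b - a := sub_pos.2 hab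
  set l : ℝ := π / (b - a) with hl
  have hl0 : 0 < l := div_pos Real.pi_pos hba
  set q : ℝ → ℝ := fun _ => l ^ 2 with hq'
  set g : ℝ → ℝ := fun y => l * Real.cos (l * (y - a)) / Real.sin (l * (y - a)) with hgdef
  set g' : ℝ → ℝ := fun y => -(l ^ 2) / Real.sin (l * (y - a)) ^ 2 with hg''
  have hu : ∀ y ∈ Set.Ioo a b, 0 < l * (y - a) ∧ l * (y - a) < π := by
    intro y hy
    constructor
    · exact mul_pos hl0 (sub_pos.2 hy.1)
    · have h1 : l * (y - a) < l * (b - a) := by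
        apply mul_lt_mul_of_pos_left _ hl0
        linarith [hy.2]
      have h2 : l * (b - a) = π := by
        rw [hl]; field_simp
      linarith
  have hsin : ∀ y ∈ Set.Ioo a b, 0 < Real.sin (l * (y - a)) := by
    intro y hy
    exact Real.sin_pos_of_pos_of_lt_pi (hu y hy).1 (hu y hy).2
  have hud : ∀ y : ℝ, HasDerivAt (fun z : ℝ => l * (z - a)) l y := by
    intro y
    simpa using ((hasDerivAt_id y).sub_const a).const_mul l
  have hgd : ∀ y ∈ Set.Ioo a b, HasDerivAt g (g' y) y := by
    intro y hy
    have hs := hsin y hy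
    have hcd : HasDerivAt (fun z : ℝ => l * Real.cos (l * (z - a)))
        (l * (-Real.sin (l * (y - a)) * l)) y := ((hud y).cos).const_mul l
    have hsd : HasDerivAt (fun z : ℝ => Real.sin (l * (z - a)))
        (Real.cos (l * (y - a)) * l) y := (hud y).sin
    have h := hcd.div hsd hs.ne'
    have heq : (l * (-Real.sin (l * (y - a)) * l) * Real.sin (l * (y - a)) -
        l * Real.cos (l * (y - a)) * (Real.cos (l * (y - a)) * l)) /
        Real.sin (l * (y - a)) ^ 2 = g' y := by
      rw [hg'']
      rw [div_eq_div_iff (by positivity) (by positivity)]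
      linear_combination (-(l ^ 2) * Real.sin (l * (y - a)) ^ 2) *
        Real.sin_sq_add_cos_sq (l * (y - a))
    rw [heq] at h
    exact h
  have hgc : ContinuousOn g (Set.Ioo a b) := fun y hy =>
    ((hgd y hy).continuousAt).continuousWithinAt
  have hg'c : ContinuousOn g' (Set.Ioo a b) := by
    apply ContinuousOn.div continuousOn_const
    · apply ContinuousOn.pow
      exact (Real.continuous_sin.comp ((continuous_id.sub continuous_const).const_smul l)).continuousOn
    · intro y hy
      exact pow_ne_zero 2 (hsin y hy).ne'
  have hq : ∀ y ∈ Set.Ioo a b, q y = -(g' y) - g y ^ 2 := by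
    intro y hy
    have hs := hsin y hy
    have hs' : Real.sin (l * (y - a)) ^ 2 ≠ 0 := pow_ne_zero 2 hs.ne'
    show l ^ 2 = -(g' y) - g y ^ 2
    have h1 : -(g' y) - g y ^ 2
        = (l ^ 2 - l ^ 2 * Real.cos (l * (y - a)) ^ 2) / Real.sin (l * (y - a)) ^ 2 := by
      simp only [hgdef, hg'']
      ring
    have hcs : Real.cos (l * (y - a)) ^ 2 = 1 - Real.sin (l * (y - a)) ^ 2 := by
      linarith [Real.sin_sq_add_cos_sq (l * (y - a))]
    rw [h1, hcs, eq_div_iff hs']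
    ring
  have hq0 : ∀ y ∈ Set.Ioo a b, 0 ≤ q y := fun y _ => sq_nonneg l
  have hqm : Measurable q := measurable_const
  -- boundary bounds with C = 2
  set δ : ℝ := min ((b - a) / 2) (1 / (2 * l)) with hδdef
  have hδ0 : 0 < δ := lt_min (by linarith) (by positivity)
  have hsin_lb : ∀ ε : ℝ, 0 < ε → ε < δ → l * ε / 2 ≤ Real.sin (l * ε) := by
    intro ε hε0 hεδ
    have h1 : l * ε ≤ 1 := by
      have : ε < 1 / (2 * l) := lt_of_lt_of_le hεδ (min_le_right _ _)
      rw [lt_div_iff₀ (by positivity)] at this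
      nlinarith
    have h2 := Real.sin_gt_sub_cube (by positivity : 0 < l * ε)
    nlinarith [sq_nonneg (l * ε), mul_pos hl0 hε0]
  have hbd : ∀ ε ∈ Set.Ioo (0:ℝ) δ, |g (a + ε)| ≤ 2 / ε ∧ |g (b - ε)| ≤ 2 / ε := by
    rintro ε ⟨hε0, hεδ⟩
    have hslb := hsin_lb ε hε0 hεδ
    have hs0 : 0 < Real.sin (l * ε) := lt_of_lt_of_le (by positivity) hslb
    have key : ∀ u : ℝ, Real.sin u = Real.sin (l * ε) →
        |l * Real.cos u / Real.sin u| ≤ 2 / ε := by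
      intro u hueq
      rw [abs_div, abs_mul, hueq, abs_of_pos hs0]
      rw [div_le_div_iff₀ hs0 hε0]
      have h1 : |Real.cos u| ≤ 1 := Real.abs_cos_le_one u
      have h2 : |l| = l := abs_of_pos hl0
      rw [h2]
      nlinarith [mul_pos hl0 hε0]
    constructor
    · apply key
      congr 1
      ring
    · have h1 : l * (b - ε - a) = π - l * ε := by
        have h2 : l * (b - a) = π := by rw [hl]; field_simp
        nlinarith [h2]
      show |l * Real.cos (l * (b - ε - a)) / Real.sin (l * (b - ε - a))| ≤ 2 / ε
      rw [h1]
      apply key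
      rw [Real.sin_pi_sub]
  obtain ⟨hint, hle⟩ := subint v a b hab hv hva hvb hL2 q g g' hgd hgc hg'c hq hq0 hqm
    2 δ hδ0 (min_le_left _ _) hbd
  have : (∫ y in Set.Ioo a b, q y * ‖v y‖ ^ 2)
      = l ^ 2 * ∫ y in Set.Ioo a b, ‖v y‖ ^ 2 := by
    rw [← MeasureTheory.integral_const_mul]
  linarith

/-- Hardy-type inequality on `(0, π)` for functions in `H₀¹(0, π)` vanishing at an
interior point `y₀`. -/
theorem hardy_dirichlet_interval (y₀ : ℝ) (hy₀ : y₀ ∈ Set.Ioo 0 π) (v : ℝ → ℂ)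
    (hv_diff : ∀ y ∈ Set.Icc 0 π, DifferentiableAt ℝ v y)
    (hv_deriv_L2 : IntegrableOn (fun y => ‖deriv v y‖ ^ 2) (Set.Ioo 0 π))
    (hv_bd0 : v 0 = 0) (hv_bdπ : v π = 0)
    (hv0 : v y₀ = 0) :
    ∫ y in Set.Ioo 0 π, ‖v y‖ ^ 2 / (y - y₀) ^ 2
      ≤ (4 * π ^ 2 / (π ^ 2 - max (y₀ ^ 2) ((π - y₀) ^ 2))) *
        ((∫ y in Set.Ioo 0 π, ‖deriv v y‖ ^ 2) - ∫ y in Set.Ioo 0 π, ‖v y‖ ^ 2) := by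
  obtain ⟨hy1, hy2⟩ := hy₀
  have hv1 : ∀ y ∈ Set.Icc 0 y₀, DifferentiableAt ℝ v y := fun y hy =>
    hv_diff y (Set.Icc_subset_Icc (le_refl _) hy2.le hy)
  have hv2 : ∀ y ∈ Set.Icc y₀ π, DifferentiableAt ℝ v y := fun y hy =>
    hv_diff y (Set.Icc_subset_Icc hy1.le (le_refl _) hy)
  have hL2a : IntegrableOn (fun y => ‖deriv v y‖ ^ 2) (Set.Ioo 0 y₀) :=
    hv_deriv_L2.mono_set (Set.Ioo_subset_Ioo (le_refl _) hy2.le)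
  have hL2b : IntegrableOn (fun y => ‖deriv v y‖ ^ 2) (Set.Ioo y₀ π) :=
    hv_deriv_L2.mono_set (Set.Ioo_subset_Ioo hy1.le (le_refl _))
  -- split helper
  have hsplit : ∀ f : ℝ → ℝ, IntegrableOn f (Set.Ioo 0 y₀) → IntegrableOn f (Set.Ioo y₀ π) →
      (∫ y in Set.Ioo 0 π, f y)
        = (∫ y in Set.Ioo 0 y₀, f y) + ∫ y in Set.Ioo y₀ π, f y := by
    intro f h1 h2
    have hdisj : Disjoint (Set.Ioo (0:ℝ) y₀) (Set.Ioo y₀ π) := by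
      rw [Set.disjoint_left]
      rintro x ⟨_, hx2⟩ ⟨hx3, _⟩
      linarith
    have hset2 : Set.Ioo (0:ℝ) y₀ ∪ Set.Ioo y₀ π = Set.Ioo 0 π \ {y₀} := by
      ext x
      simp only [Set.mem_union, Set.mem_Ioo, Set.mem_diff, Set.mem_singleton_iff]
      constructor
      · rintro (⟨h, h'⟩ | ⟨h, h'⟩)
        · exact ⟨⟨h, by linarith⟩, by intro hh; rw [hh] at h'; linarith⟩
        · exact ⟨⟨by linarith, h'⟩, by intro hh; rw [hh] at h; linarith⟩
      · rintro ⟨⟨h, h'⟩, hne⟩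
        rcases lt_or_gt_of_ne hne with hlt | hgt
        · exact Or.inl ⟨h, hlt⟩
        · exact Or.inr ⟨hgt, h'⟩
    have hae : (Set.Ioo (0:ℝ) y₀ ∪ Set.Ioo y₀ π : Set ℝ) =ᵐ[volume] Set.Ioo (0:ℝ) π := by
      rw [hset2]
      exact diff_ae_eq_self.2
        (measure_mono_null Set.inter_subset_right Real.volume_singleton)
    rw [← setIntegral_congr_set hae, setIntegral_union hdisj measurableSet_Ioo h1 h2]
  -- apply the pieces
  obtain ⟨hHi1, hH1⟩ := hardy_right v 0 y₀ hy1 hv1 hv_bd0 hv0 hL2a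
  obtain ⟨hHi2, hH2⟩ := hardy_left v y₀ π hy2 hv2 hv0 hv_bdπ hL2b
  have hW1 := wirtinger_piece v 0 y₀ hy1 hv1 hv_bd0 hv0 hL2a
  have hW2 := wirtinger_piece v y₀ π hy2 hv2 hv0 hv_bdπ hL2b
  -- integrability of ‖v‖²
  have hvc : ContinuousOn v (Set.Icc 0 π) := fun y hy =>
    (hv_diff y hy).continuousAt.continuousWithinAt
  have hFi : IntegrableOn (fun y => ‖v y‖ ^ 2) (Set.Icc 0 π) :=
    ((hvc.norm).pow 2).integrableOn_Icc
  have hFi1 : IntegrableOn (fun y => ‖v y‖ ^ 2) (Set.Ioo 0 y₀) :=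
    hFi.mono_set (fun x hx => ⟨hx.1.le, by linarith [hx.2]⟩)
  have hFi2 : IntegrableOn (fun y => ‖v y‖ ^ 2) (Set.Ioo y₀ π) :=
    hFi.mono_set (fun x hx => ⟨by linarith [hx.1], hx.2.le⟩)
  -- split the three integrals
  have hsplitH := hsplit _ hHi1 hHi2
  have hsplitD := hsplit _ hL2a hL2b
  have hsplitP := hsplit _ hFi1 hFi2
  -- notation
  set D₁ : ℝ := ∫ y in Set.Ioo 0 y₀, ‖deriv v y‖ ^ 2 with hD₁
  set D₂ : ℝ := ∫ y in Set.Ioo y₀ π, ‖deriv v y‖ ^ 2 with hD₂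
  set P₁ : ℝ := ∫ y in Set.Ioo 0 y₀, ‖v y‖ ^ 2 with hP₁
  set P₂ : ℝ := ∫ y in Set.Ioo y₀ π, ‖v y‖ ^ 2 with hP₂
  have hD₁0 : 0 ≤ D₁ := setIntegral_nonneg measurableSet_Ioo (fun y _ => sq_nonneg _)
  have hD₂0 : 0 ≤ D₂ := setIntegral_nonneg measurableSet_Ioo (fun y _ => sq_nonneg _)
  have hP₁0 : 0 ≤ P₁ := setIntegral_nonneg measurableSet_Ioo (fun y _ => sq_nonneg _)
  have hP₂0 : 0 ≤ P₂ := setIntegral_nonneg measurableSet_Ioo (fun y _ => sq_nonneg _)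
  -- Wirtinger rearranged
  have hw1' : π ^ 2 * P₁ ≤ y₀ ^ 2 * D₁ := by
    have h := hW1
    rw [sub_zero] at h
    rw [div_pow, div_mul_eq_mul_div, div_le_iff₀ (by nlinarith : (0:ℝ) < y₀ ^ 2)] at h
    linarith
  have hw2' : π ^ 2 * P₂ ≤ (π - y₀) ^ 2 * D₂ := by
    have h := hW2
    rw [div_pow, div_mul_eq_mul_div, div_le_iff₀ (by nlinarith : (0:ℝ) < (π - y₀) ^ 2)] at h
    linarith
  -- max rewriting
  set L : ℝ := max y₀ (π - y₀) with hL
  have hLa : y₀ ≤ L := le_max_left _ _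
  have hLb : π - y₀ ≤ L := le_max_right _ _
  have hLπ : L < π := max_lt (by linarith) (by linarith)
  have hL0 : 0 < L := lt_of_lt_of_le hy1 hLa
  have hmax : max (y₀ ^ 2) ((π - y₀) ^ 2) = L ^ 2 := by
    rcases max_cases y₀ (π - y₀) with ⟨h1, h2⟩ | ⟨h1, h2⟩
    · rw [hL, h1]
      exact max_eq_left (pow_le_pow_left₀ (by linarith) h2 2)
    · rw [hL, h1]
      exact max_eq_right (pow_le_pow_left₀ hy1.le h2.le 2)
  rw [hmax]
  have hS0 : 0 < π ^ 2 - L ^ 2 := by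
    have he : π ^ 2 - L ^ 2 = (π - L) * (π + L) := by ring
    rw [he]
    exact mul_pos (by linarith) (by linarith)
  have hla : y₀ ^ 2 ≤ L ^ 2 := pow_le_pow_left₀ hy1.le hLa 2
  have hlb : (π - y₀) ^ 2 ≤ L ^ 2 := pow_le_pow_left₀ (by linarith) hLb 2
  have he1 : π ^ 2 * P₁ ≤ L ^ 2 * D₁ :=
    le_trans hw1' (mul_le_mul_of_nonneg_right hla hD₁0)
  have he2 : π ^ 2 * P₂ ≤ L ^ 2 * D₂ :=
    le_trans hw2' (mul_le_mul_of_nonneg_right hlb hD₂0)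
  have hkey : 4 * (D₁ + D₂) ≤ (4 * π ^ 2 / (π ^ 2 - L ^ 2)) * ((D₁ + D₂) - (P₁ + P₂)) := by
    rw [div_mul_eq_mul_div, le_div_iff₀ hS0]
    have hg : 4 * π ^ 2 * (D₁ + D₂ - (P₁ + P₂)) - 4 * (D₁ + D₂) * (π ^ 2 - L ^ 2)
        = 4 * (L ^ 2 * D₁ - π ^ 2 * P₁) + 4 * (L ^ 2 * D₂ - π ^ 2 * P₂) := by ring
    nlinarith [he1, he2]
  rw [hsplitH, hsplitD, hsplitP]
  linarith [hH1, hH2, hkey]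
end

section
/- Let y₀ ∈ (0, π), R > 0 with R < min{y₀, π − y₀}, m = R/√2, and c₁₅ = 18 + 32π²/R². For any y ∈ (0, π), y ≠ y₀, and any u ∈ H₀¹(ℝ) (in the x variable), one has ∫_ℝ |u(x)|²/(x² + (y − y₀)²) dx ≤ 16 ∫_ℝ |u'(x)|² dx + c₁₅ ∫_{−m}^{m} |u(x)|²/(x² + (y − y₀)²) dx. -/
set_option maxHeartbeats 1000000

open MeasureTheory Real Set
open scoped RealInnerProductSpace

lemma sq_int {f : ℝ → ℂ} (hf : MemLp f 2 volume) : Integrable (fun x => ‖f x‖^2) := by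
  have h := hf.integrable_norm_rpow two_ne_zero ENNReal.ofNat_ne_top
  simpa [ENNReal.toReal_ofNat, Real.rpow_natCast] using h

lemma hasDeriv_normSq (u : ℝ → ℂ) (hu : Differentiable ℝ u) (x : ℝ) :
    HasDerivAt (fun t => ‖u t‖^2) (2 * ⟪deriv u x, u x⟫) x := by
  have h := HasDerivAt.inner ℝ (hu x).hasDerivAt (hu x).hasDerivAt
  simp only [real_inner_self_eq_norm_sq] at h
  convert h using 1
  · rfl
  · rfl
  · rw [real_inner_comm]; ring

lemma hardy_right_s15 (u : ℝ → ℂ) (hu_diff : Differentiable ℝ u)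
    (hu_L2 : MemLp u 2 volume) (hu_deriv_L2 : MemLp (deriv u) 2 volume)
    (m : ℝ) (hm : 0 < m) :
    ∫ x in Set.Ioi m, ‖u x‖^2 / x^2
      ≤ (8 / m^2) * (∫ x in Set.Ioo 0 m, ‖u x‖^2)
        + 4 * ∫ x in Set.Ioi 0, ‖deriv u x‖^2 := by
  set w : ℝ → ℝ := fun x => ‖u x‖^2 with hw_def
  set g : ℝ → ℝ := fun x => ‖deriv u x‖^2 with hg_def
  set W : ℝ → ℝ := fun x => 2 * ⟪deriv u x, u x⟫ with hW_def
  show (∫ x in Set.Ioi m, w x / x^2)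
      ≤ (8/m^2) * (∫ x in Set.Ioo 0 m, w x) + 4 * ∫ x in Set.Ioi 0, g x
  have hw_cont : Continuous w := (hu_diff.continuous.norm).pow 2
  have hw_nonneg : ∀ x, 0 ≤ w x := fun x => by positivity
  have hg_nonneg : ∀ x, 0 ≤ g x := fun x => by positivity
  have hw_int : Integrable w := sq_int hu_L2
  have hg_int : Integrable g := sq_int hu_deriv_L2
  have hW_meas : AEStronglyMeasurable W volume :=
    (hu_deriv_L2.1.inner hu_L2.1).const_mul 2
  have hW_bound : ∀ x, |W x| ≤ g x + w x := by
    intro x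
    have h1 := abs_real_inner_le_norm (deriv u x) (u x)
    simp only [hW_def, hg_def, hw_def, abs_mul, abs_two]
    nlinarith [sq_nonneg (‖deriv u x‖ - ‖u x‖), abs_nonneg (⟪deriv u x, u x⟫)]
  have hW_int : Integrable W :=
    (hg_int.add hw_int).mono' hW_meas (Filter.Eventually.of_forall fun x => by
      simpa using hW_bound x)
  have hderiv : ∀ x, HasDerivAt w (W x) x := hasDeriv_normSq u hu_diff
  obtain ⟨s, hs_mem, hs_min⟩ := (isCompact_Icc (a := m/2) (b := m)).exists_isMinOn
    (nonempty_Icc.2 (by linarith)) hw_cont.continuousOn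
  have hs_lb : m/2 ≤ s := hs_mem.1
  have hs_ub : s ≤ m := hs_mem.2
  have hs0 : 0 < s := lt_of_lt_of_le (by linarith) hs_lb
  have havg : w s * (m/2) ≤ ∫ x in Set.Ioo 0 m, w x := by
    have h1 : ∫ x in Set.Icc (m/2) m, w s ≤ ∫ x in Set.Icc (m/2) m, w x :=
      setIntegral_mono_on (integrableOn_const (by simp)) hw_int.integrableOn
        measurableSet_Icc (fun x hx => hs_min hx)
    have h2 : ∫ x in Set.Icc (m/2) m, (w s : ℝ) = w s * (m/2) := by
      rw [setIntegral_const, measureReal_def, Real.volume_Icc, smul_eq_mul,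
        ENNReal.toReal_ofReal (by linarith)]
      ring
    have h3 : ∫ x in Set.Icc (m/2) m, w x ≤ ∫ x in Set.Ioo 0 m, w x := by
      apply setIntegral_mono_set hw_int.integrableOn
        (Filter.Eventually.of_forall fun x => hw_nonneg x)
      rw [ae_le_set]
      refine measure_mono_null (fun x hx => ?_) (volume_singleton (a := m))
      simp only [mem_diff, mem_Icc, mem_Ioo, not_and, not_lt, mem_singleton_iff] at hx ⊢
      rcases hx with ⟨⟨h4, h5⟩, h6⟩
      exact le_antisymm h5 (h6 (by linarith))
    linarith
  have hint : IntegrableOn (fun x => w x / x^2) (Set.Ioi s) volume := by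
    have hmeas : AEStronglyMeasurable (fun x : ℝ => w x / x^2)
        (volume.restrict (Set.Ioi s)) :=
      (hw_cont.measurable.div (measurable_id.pow_const 2)).aestronglyMeasurable
    refine Integrable.mono' ((hw_int.const_mul (1/s^2)).restrict (s := Set.Ioi s)) hmeas ?_
    filter_upwards [ae_restrict_mem measurableSet_Ioi] with x hx
    rw [norm_div, norm_of_nonneg (hw_nonneg x), norm_of_nonneg (by positivity : (0:ℝ) ≤ x^2),
      one_div, inv_mul_eq_div]
    exact div_le_div_of_nonneg_left (hw_nonneg x) (by positivity)
      (by nlinarith [mem_Ioi.mp hx])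
  -- key interval estimate
  have key : ∀ B, s ≤ B → ∫ x in s..B, w x / x^2
      ≤ 2 * (w s / s) + 4 * ∫ x in Set.Ioi 0, g x := by
    intro B hB
    have hderivh : ∀ x ∈ uIcc s B, HasDerivAt (fun t => w t / t) (W x / x - w x / x^2) x := by
      intro x hx
      rw [uIcc_of_le hB] at hx
      have hx0 : 0 < x := lt_of_lt_of_le hs0 hx.1
      have hd := (hderiv x).div (hasDerivAt_id x) (ne_of_gt hx0)
      convert hd using 1
      · rfl
      · rfl
      · rfl
      · simp only [id]
        field_simp
    have hi_wx2 : IntervalIntegrable (fun x => w x / x^2) volume s B := by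
      apply ContinuousOn.intervalIntegrable
      apply hw_cont.continuousOn.div (continuous_pow 2).continuousOn
      intro x hx
      rw [uIcc_of_le hB] at hx
      have hx0 : 0 < x := lt_of_lt_of_le hs0 hx.1
      positivity
    have hi_Wx : IntervalIntegrable (fun x => W x / x) volume s B := by
      rw [intervalIntegrable_iff_integrableOn_Ioc_of_le hB]
      have hmeas : AEStronglyMeasurable (fun x : ℝ => W x / x)
          (volume.restrict (Set.Ioc s B)) :=
        ((hW_meas.aemeasurable.div (measurable_id.aemeasurable)).aestronglyMeasurable).restrict
      refine Integrable.mono' ((hW_int.abs.const_mul (1/s)).restrict (s := Set.Ioc s B))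
        hmeas ?_
      filter_upwards [ae_restrict_mem measurableSet_Ioc] with x hx
      have hx0 : 0 < x := lt_trans hs0 hx.1
      rw [norm_div, Real.norm_eq_abs, Real.norm_eq_abs, abs_of_pos hx0, one_div,
        inv_mul_eq_div]
      exact div_le_div_of_nonneg_left (abs_nonneg (W x)) hs0 hx.1.le
    have hi_g : IntervalIntegrable g volume s B := hg_int.intervalIntegrable
    have hftc := intervalIntegral.integral_eq_sub_of_hasDerivAt hderivh (hi_Wx.sub hi_wx2)
    rw [intervalIntegral.integral_sub hi_Wx hi_wx2] at hftc
    have hpt : ∀ x ∈ Set.Icc s B, W x / x ≤ (1/2) * (w x / x^2) + 2 * g x := by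
      intro x hx
      have hx0 : 0 < x := lt_of_lt_of_le hs0 hx.1
      have ha := abs_real_inner_le_norm (deriv u x) (u x)
      have h1 : W x ≤ 2*(‖deriv u x‖*‖u x‖) := by
        simp only [hW_def]
        nlinarith [le_abs_self (⟪deriv u x, u x⟫)]
      have h2 : W x / x ≤ 2*(‖deriv u x‖*‖u x‖)/x := (div_le_div_iff_of_pos_right hx0).mpr h1
      have h3 : 2*(‖deriv u x‖*‖u x‖)/x ≤ (1/2) * (w x / x^2) + 2 * g x := by
        have hident : (1/2) * (w x / x^2) + 2 * g x - 2*(‖deriv u x‖*‖u x‖)/x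
            = (‖u x‖/x - 2*‖deriv u x‖)^2/2 := by
          simp only [hw_def, hg_def]
          field_simp
          ring
        nlinarith [sq_nonneg (‖u x‖/x - 2*‖deriv u x‖)]
      linarith
    have hmono2 : ∫ x in s..B, W x / x
        ≤ ∫ x in s..B, ((1/2) * (w x / x^2) + 2 * g x) :=
      intervalIntegral.integral_mono_on hB hi_Wx
        ((hi_wx2.const_mul _).add (hi_g.const_mul _)) hpt
    rw [intervalIntegral.integral_add (hi_wx2.const_mul _) (hi_g.const_mul _),
      intervalIntegral.integral_const_mul, intervalIntegral.integral_const_mul] at hmono2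
    have hgle : ∫ x in s..B, g x ≤ ∫ x in Set.Ioi 0, g x := by
      rw [intervalIntegral.integral_of_le hB]
      exact setIntegral_mono_set hg_int.integrableOn
        (Filter.Eventually.of_forall hg_nonneg)
        (Filter.Eventually.of_forall fun x hx => lt_trans hs0 hx.1)
    have hwB : 0 ≤ w B / B := div_nonneg (hw_nonneg B) (le_trans hs0.le hB)
    linarith [hftc, hmono2, hgle, hwB]
  have hlim : ∫ x in Set.Ioi s, w x / x^2 ≤ 2 * (w s / s) + 4 * ∫ x in Set.Ioi 0, g x := by
    have ht := intervalIntegral_tendsto_integral_Ioi s hint (Filter.tendsto_id (α := ℝ))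
    exact le_of_tendsto ht (Filter.eventually_atTop.2 ⟨s, fun B hB => key B hB⟩)
  have hmono : ∫ x in Set.Ioi m, w x / x^2 ≤ ∫ x in Set.Ioi s, w x / x^2 := by
    apply setIntegral_mono_set hint
      (Filter.Eventually.of_forall fun x => by positivity)
    exact Filter.Eventually.of_forall (fun x hx => lt_of_le_of_lt hs_ub hx)
  -- combine
  have hws : w s / s ≤ (4 / m^2) * ∫ x in Set.Ioo 0 m, w x := by
    have h2 : w s / s ≤ w s / (m/2) :=
      div_le_div_of_nonneg_left (hw_nonneg s) (by linarith) hs_lb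
    have h3 : w s / (m/2) ≤ (4 / m^2) * ∫ x in Set.Ioo 0 m, w x := by
      rw [div_le_iff₀ (by linarith : (0:ℝ) < m/2)]
      have he : (4 / m^2) * (∫ x in Set.Ioo 0 m, w x) * (m/2)
          = 2 * (∫ x in Set.Ioo 0 m, w x) / m := by
        field_simp; ring
      rw [he, le_div_iff₀ hm]
      linarith [havg]
    linarith
  have h8 : (8/m^2) * (∫ x in Set.Ioo 0 m, w x)
      = 2 * ((4/m^2) * ∫ x in Set.Ioo 0 m, w x) := by ring
  linarith [hlim, hmono, hws, h8]

lemma hardy_left_s15 (u : ℝ → ℂ) (hu_diff : Differentiable ℝ u)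
    (hu_L2 : MemLp u 2 volume) (hu_deriv_L2 : MemLp (deriv u) 2 volume)
    (m : ℝ) (hm : 0 < m) :
    ∫ x in Set.Iio (-m), ‖u x‖^2 / x^2
      ≤ (8 / m^2) * (∫ x in Set.Ioo (-m) 0, ‖u x‖^2)
        + 4 * ∫ x in Set.Iio 0, ‖deriv u x‖^2 := by
  set v : ℝ → ℂ := fun x => u (-x) with hv_def
  have hneg : MeasurePreserving (fun x : ℝ => -x) volume volume :=
    Measure.measurePreserving_neg _
  have hv_diff : Differentiable ℝ v := hu_diff.comp differentiable_neg
  have hv_deriv : ∀ x, deriv v x = -deriv u (-x) := by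
    intro x
    have h1 := HasDerivAt.scomp (𝕜 := ℝ) x (hu_diff (-x)).hasDerivAt (hasDerivAt_neg x)
    exact (by simpa [neg_smul, one_smul] using h1.deriv : deriv (u ∘ Neg.neg) x = -deriv u (-x))
  have hv_L2 : MemLp v 2 volume := hu_L2.comp_measurePreserving hneg
  have hv_deriv_L2 : MemLp (deriv v) 2 volume := by
    have he : deriv v = fun x => -deriv u (-x) := funext hv_deriv
    rw [he]
    exact (hu_deriv_L2.comp_measurePreserving hneg).neg
  have H := hardy_right_s15 v hv_diff hv_L2 hv_deriv_L2 m hm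
  have e1 : (∫ x in Set.Ioi m, ‖v x‖^2 / x^2) = ∫ x in Set.Iio (-m), ‖u x‖^2 / x^2 := by
    have key := integral_comp_neg_Ioi m (fun t => ‖u t‖^2 / t^2)
    calc (∫ x in Set.Ioi m, ‖v x‖^2 / x^2)
        = ∫ x in Set.Ioi m, (fun t => ‖u t‖^2 / t^2) (-x) := by
          refine setIntegral_congr_fun measurableSet_Ioi fun x _ => ?_
          simp [hv_def, neg_sq]
      _ = ∫ x in Set.Iic (-m), ‖u x‖^2 / x^2 := key
      _ = ∫ x in Set.Iio (-m), ‖u x‖^2 / x^2 := integral_Iic_eq_integral_Iio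
  have e2 : (∫ x in Set.Ioo 0 m, ‖v x‖^2) = ∫ x in Set.Ioo (-m) 0, ‖u x‖^2 := by
    have h : (fun x => ‖v x‖^2) = fun x => (fun t => ‖u t‖^2) (-x) := rfl
    rw [h, ← integral_Ioc_eq_integral_Ioo, ← intervalIntegral.integral_of_le hm.le,
      intervalIntegral.integral_comp_neg (fun t => ‖u t‖^2), neg_zero,
      intervalIntegral.integral_of_le (by linarith : -m ≤ 0), integral_Ioc_eq_integral_Ioo]
  have e3 : (∫ x in Set.Ioi 0, ‖deriv v x‖^2) = ∫ x in Set.Iio 0, ‖deriv u x‖^2 := by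
    have key := integral_comp_neg_Ioi 0 (fun t => ‖deriv u t‖^2)
    rw [neg_zero] at key
    calc (∫ x in Set.Ioi 0, ‖deriv v x‖^2)
        = ∫ x in Set.Ioi 0, (fun t => ‖deriv u t‖^2) (-x) := by
          refine setIntegral_congr_fun measurableSet_Ioi fun x _ => ?_
          simp [hv_deriv x]
      _ = ∫ x in Set.Iic 0, ‖deriv u x‖^2 := key
      _ = ∫ x in Set.Iio 0, ‖deriv u x‖^2 := integral_Iic_eq_integral_Iio
  rw [e1, e2, e3] at H
  exact H

lemma int_wx2 {w : ℝ → ℝ} (hw_int : Integrable w) (hw_cont : Continuous w)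
    (hw_nonneg : ∀ x, 0 ≤ w x) {S : Set ℝ} {s : ℝ} (hs : 0 < s)
    (hSs : ∀ x ∈ S, s^2 ≤ x^2) (hSm : MeasurableSet S) :
    IntegrableOn (fun x => w x / x^2) S volume := by
  have hmeas : AEStronglyMeasurable (fun x : ℝ => w x / x^2) (volume.restrict S) :=
    (hw_cont.measurable.div (measurable_id.pow_const 2)).aestronglyMeasurable
  refine Integrable.mono' ((hw_int.const_mul (1/s^2)).restrict (s := S)) hmeas ?_
  filter_upwards [ae_restrict_mem hSm] with x hx
  rw [norm_div, norm_of_nonneg (hw_nonneg x), norm_of_nonneg (by positivity : (0:ℝ) ≤ x^2),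
    one_div, inv_mul_eq_div]
  exact div_le_div_of_nonneg_left (hw_nonneg x) (by positivity) (hSs x hx)

/-- One-dimensional splitting estimate from the proof of Theorem 7.1: for `H₀¹(ℝ)`
functions `u` (in the `x` variable) and any `y ≠ y₀` in `(0, π)`,
`∫ |u|²/(x² + (y−y₀)²) ≤ 16 ∫ |u'|² + c₁₅ ∫_{−m}^{m} |u|²/(x² + (y−y₀)²)`. -/
theorem one_dim_splitting_estimate (y₀ : ℝ) (hy₀ : y₀ ∈ Set.Ioo 0 π)
    (R : ℝ) (hR : 0 < R) (hRlt : R < min y₀ (π - y₀))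
    (y : ℝ) (hy : y ∈ Set.Ioo 0 π) (hyne : y ≠ y₀)
    (u : ℝ → ℂ)
    (hu_diff : Differentiable ℝ u)
    (hu_L2 : MemLp u 2 volume)
    (hu_deriv_L2 : MemLp (deriv u) 2 volume) :
    ∫ x : ℝ, ‖u x‖ ^ 2 / (x ^ 2 + (y - y₀) ^ 2)
      ≤ 16 * (∫ x : ℝ, ‖deriv u x‖ ^ 2) +
        (18 + 32 * π ^ 2 / R ^ 2) *
          ∫ x in Set.Ioo (-(R / Real.sqrt 2)) (R / Real.sqrt 2),
            ‖u x‖ ^ 2 / (x ^ 2 + (y - y₀) ^ 2) := by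
  have hπ : 0 < π := pi_pos
  set b := y - y₀ with hb_def
  have hb : b ≠ 0 := sub_ne_zero.2 hyne
  have hb2 : 0 < b^2 := by positivity
  have hbπ : b^2 ≤ π^2 := by
    have h1 : -π < b := by
      have := hy.1; have := hy₀.2; simp only [hb_def]; linarith
    have h2 : b < π := by
      have := hy.2; have := hy₀.1; simp only [hb_def]; linarith
    nlinarith
  set m := R / Real.sqrt 2 with hm_def
  have hs2 : (0:ℝ) < Real.sqrt 2 := Real.sqrt_pos.2 (by norm_num)
  have hm : 0 < m := div_pos hR hs2
  have hm2 : m^2 = R^2/2 := by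
    rw [hm_def, div_pow, Real.sq_sqrt (by norm_num : (0:ℝ) ≤ 2)]
  clear_value b m
  have hw_cont : Continuous (fun x : ℝ => ‖u x‖^2) := (hu_diff.continuous.norm).pow 2
  have hw_nonneg : ∀ x : ℝ, 0 ≤ ‖u x‖^2 := fun x => by positivity
  have hg_nonneg : ∀ x : ℝ, 0 ≤ ‖deriv u x‖^2 := fun x => by positivity
  have hf_nonneg : ∀ x : ℝ, 0 ≤ ‖u x‖^2 / (x^2 + b^2) := fun x => by positivity
  have hw_int : Integrable (fun x : ℝ => ‖u x‖^2) := sq_int hu_L2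
  have hg_int : Integrable (fun x : ℝ => ‖deriv u x‖^2) := sq_int hu_deriv_L2
  have hf_cont : Continuous (fun x : ℝ => ‖u x‖^2 / (x^2 + b^2)) := by
    apply hw_cont.div (by continuity)
    intro x; positivity
  have hf_int : Integrable (fun x : ℝ => ‖u x‖^2 / (x^2 + b^2)) := by
    refine (hw_int.const_mul (1/b^2)).mono' hf_cont.aestronglyMeasurable
      (Filter.Eventually.of_forall fun x => ?_)
    rw [norm_of_nonneg (hf_nonneg x), one_div, inv_mul_eq_div]
    exact div_le_div_of_nonneg_left (hw_nonneg x) hb2 (by nlinarith [sq_nonneg x])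
  -- split the integral
  have hd1 : Disjoint (Set.Icc (-m) m) (Set.Ioi m) := by
    rw [Set.disjoint_left]; intro a ha hb'; exact absurd ha.2 (not_le.2 hb')
  have hd2 : Disjoint (Set.Iio (-m)) (Set.Ici (-m)) := by
    rw [Set.disjoint_left]; intro a ha hb'
    exact absurd (mem_Ici.mp hb') (not_le.2 (mem_Iio.mp ha))
  have hsplit : (∫ x, ‖u x‖^2 / (x^2 + b^2)) = (∫ x in Set.Iio (-m), ‖u x‖^2 / (x^2 + b^2))
      + ((∫ x in Set.Icc (-m) m, ‖u x‖^2 / (x^2 + b^2))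
        + ∫ x in Set.Ioi m, ‖u x‖^2 / (x^2 + b^2)) := by
    rw [← setIntegral_union hd1 measurableSet_Ioi hf_int.integrableOn hf_int.integrableOn,
      Set.Icc_union_Ioi_eq_Ici (by linarith : -m ≤ m),
      ← setIntegral_union hd2 measurableSet_Ici hf_int.integrableOn hf_int.integrableOn,
      Set.Iio_union_Ici, setIntegral_univ]
  -- compare with w/x^2 on outer regions
  have hint_P : IntegrableOn (fun x => ‖u x‖^2 / x^2) (Set.Ioi m) volume :=
    int_wx2 hw_int hw_cont hw_nonneg hm
      (fun x hx => by have := mem_Ioi.mp hx; nlinarith) measurableSet_Ioi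
  have hint_N : IntegrableOn (fun x => ‖u x‖^2 / x^2) (Set.Iio (-m)) volume :=
    int_wx2 hw_int hw_cont hw_nonneg hm
      (fun x hx => by have := mem_Iio.mp hx; nlinarith) measurableSet_Iio
  have hP1 : (∫ x in Set.Ioi m, ‖u x‖^2 / (x^2 + b^2)) ≤ ∫ x in Set.Ioi m, ‖u x‖^2 / x^2 := by
    refine setIntegral_mono_on hf_int.integrableOn hint_P measurableSet_Ioi fun x hx => ?_
    have hx0 : 0 < x := lt_trans hm (mem_Ioi.mp hx)
    exact div_le_div_of_nonneg_left (hw_nonneg x) (by positivity) (by nlinarith)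
  have hN1 : (∫ x in Set.Iio (-m), ‖u x‖^2 / (x^2 + b^2))
      ≤ ∫ x in Set.Iio (-m), ‖u x‖^2 / x^2 := by
    refine setIntegral_mono_on hf_int.integrableOn hint_N measurableSet_Iio fun x hx => ?_
    have hx0 : x < -m := mem_Iio.mp hx
    exact div_le_div_of_nonneg_left (hw_nonneg x) (by nlinarith) (by nlinarith)
  have HP := hardy_right_s15 u hu_diff hu_L2 hu_deriv_L2 m hm
  have HN := hardy_left_s15 u hu_diff hu_L2 hu_deriv_L2 m hm
  -- local terms
  have hA : (∫ x in Set.Ioo 0 m, ‖u x‖^2)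
      ≤ (m^2+b^2) * ∫ x in Set.Ioo (-m) m, ‖u x‖^2 / (x^2 + b^2) := by
    have h1 : (∫ x in Set.Ioo 0 m, ‖u x‖^2)
        ≤ ∫ x in Set.Ioo 0 m, (m^2+b^2) * (‖u x‖^2 / (x^2 + b^2)) := by
      refine setIntegral_mono_on hw_int.integrableOn
        ((hf_int.const_mul _).integrableOn) measurableSet_Ioo fun x hx => ?_
      rcases mem_Ioo.mp hx with ⟨hx1, hx2⟩
      rw [mul_div_assoc', le_div_iff₀ (by positivity)]
      have hxm : x^2 ≤ m^2 := by nlinarith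
      nlinarith [mul_le_mul_of_nonneg_left hxm (hw_nonneg x)]
    have h2 : (∫ x in Set.Ioo 0 m, (m^2+b^2) * (‖u x‖^2 / (x^2 + b^2)))
        ≤ ∫ x in Set.Ioo (-m) m, (m^2+b^2) * (‖u x‖^2 / (x^2 + b^2)) := by
      refine setIntegral_mono_set (hf_int.const_mul _).integrableOn
        (Filter.Eventually.of_forall fun x => by positivity)
        (Filter.Eventually.of_forall fun x hx => ?_)
      rcases mem_Ioo.mp hx with ⟨hx1, hx2⟩
      exact mem_Ioo.mpr ⟨by linarith, hx2⟩
    simp only [integral_const_mul] at h1 h2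
    linarith
  have hA' : (∫ x in Set.Ioo (-m) 0, ‖u x‖^2)
      ≤ (m^2+b^2) * ∫ x in Set.Ioo (-m) m, ‖u x‖^2 / (x^2 + b^2) := by
    have h1 : (∫ x in Set.Ioo (-m) 0, ‖u x‖^2)
        ≤ ∫ x in Set.Ioo (-m) 0, (m^2+b^2) * (‖u x‖^2 / (x^2 + b^2)) := by
      refine setIntegral_mono_on hw_int.integrableOn
        ((hf_int.const_mul _).integrableOn) measurableSet_Ioo fun x hx => ?_
      rcases mem_Ioo.mp hx with ⟨hx1, hx2⟩
      rw [mul_div_assoc', le_div_iff₀ (by positivity)]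
      have hxm : x^2 ≤ m^2 := by nlinarith
      nlinarith [mul_le_mul_of_nonneg_left hxm (hw_nonneg x)]
    have h2 : (∫ x in Set.Ioo (-m) 0, (m^2+b^2) * (‖u x‖^2 / (x^2 + b^2)))
        ≤ ∫ x in Set.Ioo (-m) m, (m^2+b^2) * (‖u x‖^2 / (x^2 + b^2)) := by
      refine setIntegral_mono_set (hf_int.const_mul _).integrableOn
        (Filter.Eventually.of_forall fun x => by positivity)
        (Filter.Eventually.of_forall fun x hx => ?_)
      rcases mem_Ioo.mp hx with ⟨hx1, hx2⟩
      exact mem_Ioo.mpr ⟨hx1, by linarith⟩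
    simp only [integral_const_mul] at h1 h2
    linarith
  -- derivative terms
  have hG : (∫ x in Set.Ioi 0, ‖deriv u x‖^2) + (∫ x in Set.Iio 0, ‖deriv u x‖^2)
      ≤ ∫ x, ‖deriv u x‖^2 := by
    have hd3 : Disjoint (Set.Iio (0:ℝ)) (Set.Ioi 0) := by
      rw [Set.disjoint_left]; intro a ha hb'
      exact absurd (mem_Ioi.mp hb') (not_lt.2 (le_of_lt (mem_Iio.mp ha)))
    have h1 : (∫ x in Set.Iio (0:ℝ), ‖deriv u x‖^2) + (∫ x in Set.Ioi 0, ‖deriv u x‖^2)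
        = ∫ x in (Set.Iio 0 ∪ Set.Ioi 0), ‖deriv u x‖^2 :=
      (setIntegral_union hd3 measurableSet_Ioi hg_int.integrableOn hg_int.integrableOn).symm
    have h2 : (∫ x in (Set.Iio (0:ℝ) ∪ Set.Ioi 0), ‖deriv u x‖^2) ≤ ∫ x, ‖deriv u x‖^2 :=
      setIntegral_le_integral hg_int (Filter.Eventually.of_forall hg_nonneg)
    linarith
  have hIcc : (∫ x in Set.Icc (-m) m, ‖u x‖^2 / (x^2 + b^2))
      = ∫ x in Set.Ioo (-m) m, ‖u x‖^2 / (x^2 + b^2) :=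
    integral_Icc_eq_integral_Ioo
  -- final arithmetic
  have hL0 : 0 ≤ ∫ x in Set.Ioo (-m) m, ‖u x‖^2 / (x^2 + b^2) :=
    setIntegral_nonneg measurableSet_Ioo fun x _ => hf_nonneg x
  have hG0 : 0 ≤ ∫ x : ℝ, ‖deriv u x‖^2 := integral_nonneg hg_nonneg
  have e8 : ∀ L : ℝ, 8/m^2 * ((m^2+b^2) * L) = (8 + 16*b^2/R^2) * L := by
    intro L; rw [hm2]; field_simp; ring
  have hPterm : (∫ x in Set.Ioi m, ‖u x‖^2 / x^2)
      ≤ (8 + 16*b^2/R^2) * (∫ x in Set.Ioo (-m) m, ‖u x‖^2 / (x^2 + b^2))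
        + 4 * ∫ x in Set.Ioi 0, ‖deriv u x‖^2 := by
    have h := mul_le_mul_of_nonneg_left hA (by positivity : (0:ℝ) ≤ 8/m^2)
    rw [e8] at h
    linarith [HP]
  have hNterm : (∫ x in Set.Iio (-m), ‖u x‖^2 / x^2)
      ≤ (8 + 16*b^2/R^2) * (∫ x in Set.Ioo (-m) m, ‖u x‖^2 / (x^2 + b^2))
        + 4 * ∫ x in Set.Iio 0, ‖deriv u x‖^2 := by
    have h := mul_le_mul_of_nonneg_left hA' (by positivity : (0:ℝ) ≤ 8/m^2)
    rw [e8] at h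
    linarith [HN]
  have hbRL : 32*b^2/R^2 * (∫ x in Set.Ioo (-m) m, ‖u x‖^2 / (x^2 + b^2))
      ≤ 32*π^2/R^2 * (∫ x in Set.Ioo (-m) m, ‖u x‖^2 / (x^2 + b^2)) := by
    apply mul_le_mul_of_nonneg_right _ hL0
    gcongr
  have hfin : (8 + 16*b^2/R^2) * (∫ x in Set.Ioo (-m) m, ‖u x‖^2 / (x^2 + b^2))
        + (8 + 16*b^2/R^2) * (∫ x in Set.Ioo (-m) m, ‖u x‖^2 / (x^2 + b^2))
        + (∫ x in Set.Ioo (-m) m, ‖u x‖^2 / (x^2 + b^2))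
      ≤ (18 + 32*π^2/R^2) * (∫ x in Set.Ioo (-m) m, ‖u x‖^2 / (x^2 + b^2)) := by
    have hd32 : 32*b^2/R^2 ≤ 32*π^2/R^2 := by gcongr
    have he : 16*b^2/R^2 + 16*b^2/R^2 = 32*b^2/R^2 := by ring
    have hc : (8 + 16*b^2/R^2) + (8 + 16*b^2/R^2) + 1 ≤ 18 + 32*π^2/R^2 := by
      linarith [hd32, he]
    calc (8 + 16*b^2/R^2) * (∫ x in Set.Ioo (-m) m, ‖u x‖^2 / (x^2 + b^2))
        + (8 + 16*b^2/R^2) * (∫ x in Set.Ioo (-m) m, ‖u x‖^2 / (x^2 + b^2))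
        + (∫ x in Set.Ioo (-m) m, ‖u x‖^2 / (x^2 + b^2))
        = ((8 + 16*b^2/R^2) + (8 + 16*b^2/R^2) + 1)
            * (∫ x in Set.Ioo (-m) m, ‖u x‖^2 / (x^2 + b^2)) := by ring
      _ ≤ (18 + 32*π^2/R^2) * (∫ x in Set.Ioo (-m) m, ‖u x‖^2 / (x^2 + b^2)) :=
          mul_le_mul_of_nonneg_right hc hL0
  linarith [hsplit, hN1, hP1, hPterm, hNterm, hG, hIcc, hG0, hfin]
end
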